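/- arXiv:2005.05959 — 15 statements merged into one kernel-verified Lean document; each statement's English description precedes it below -/
import Mathlib

section
/- Let R ⊆ T be an extension of commutative rings with a common nonzero ideal I (i.e., I is simultaneously an ideal of R and of T). If I contains an element that is a non-zero-divisor of T, then T is contained in the total quotient ring T(R) of R, and indeed T ⊆ (I : I), where (I : I) = {x ∈ T(R) : xI ⊆ I}. -/
set_option maxHeartbeats 2000000 in
set_option synthInstance.maxHeartbeats 400000 in
/-- Let `R ⊆ T` be an extension of commutative rings with a common nonzero
ideal `I` (an ideal of `T` whose underlying set is contained in `R`, hence is also an ideal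
of `R`).  If `I` contains a non-zero-divisor of `T`, then `T` is contained in the total
quotient ring `T(R)` of `R` — i.e. there is an injective ring homomorphism `g : T → T(R)`
extending the canonical map `R → T(R)` — and indeed the image of `T` lands in
`(I : I) = {x ∈ T(R) : x·I ⊆ I}`. -/
theorem stmt0 {T : Type*} [CommRing T] (R : Subring T)
    (I : Ideal T) (hI0 : I ≠ ⊥) (hIR : (I : Set T) ⊆ (R : Set T))
    (hreg : ∃ y ∈ I, y ∈ nonZeroDivisors T) :
    ∃ g : T →+* FractionRing ↥R, Function.Injective g ∧
      (∀ r : ↥R, g ↑r = algebraMap ↥R (FractionRing ↥R) r) ∧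
      ∀ t : T, ∀ i ∈ algebraMap ↥R (FractionRing ↥R) '' {a : ↥R | (a : T) ∈ I},
        g t * i ∈ algebraMap ↥R (FractionRing ↥R) '' {a : ↥R | (a : T) ∈ I} := by
  obtain ⟨y, hyI, hyreg⟩ := hreg
  set K := FractionRing ↥R
  set f : ↥R →+* K := (algebraMap ↥R K : ↥R →+* K) with hf
  have hmem : ∀ t : T, t * y ∈ R := fun t => hIR (I.mul_mem_left t hyI)
  set m : T → ↥R := fun t => ⟨t * y, hmem t⟩ with hm
  have yR : ↥R := ⟨y, hIR hyI⟩
  have hyRreg : (⟨y, hIR hyI⟩ : ↥R) ∈ nonZeroDivisors ↥R := by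
    rw [mem_nonZeroDivisors_iff_right]
    intro r hr
    apply Subtype.ext
    apply mem_nonZeroDivisors_iff_right.mp hyreg
    have := congrArg (Subtype.val) hr
    simpa [mul_comm] using this
  have hunit : IsUnit (f ⟨y, hIR hyI⟩) :=
    IsLocalization.map_units K (⟨⟨y, hIR hyI⟩, hyRreg⟩ : nonZeroDivisors ↥R)
  obtain ⟨u, hu⟩ := hunit
  have finj : Function.Injective f := IsFractionRing.injective ↥R K
  have key : ∀ a b : T, f (m a) * f (m b) = f (m (a * b)) * ↑u := by
    intro a b
    rw [hu, ← map_mul, ← map_mul]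
    congr 1
    apply Subtype.ext
    show (a * y) * (b * y) = (a * b * y) * y
    ring
  have huinv : (↑u : K) * ↑u⁻¹ = 1 := u.mul_inv
  refine ⟨{ toFun := fun t => f (m t) * ↑u⁻¹
            map_one' := by
              show f (m 1) * ↑u⁻¹ = 1
              have : m 1 = ⟨y, hIR hyI⟩ := by apply Subtype.ext; show 1 * y = y; ring
              rw [this, ← hu]; exact huinv
            map_mul' := fun a b => by
              show f (m (a * b)) * ↑u⁻¹ = (f (m a) * ↑u⁻¹) * (f (m b) * ↑u⁻¹)
              have k := key a b
              linear_combination (-(↑u⁻¹ * ↑u⁻¹) : K) * k - (f (m (a * b)) * ↑u⁻¹) * huinv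
            map_zero' := by
              show f (m 0) * ↑u⁻¹ = 0
              have : m 0 = 0 := by apply Subtype.ext; show 0 * y = 0; ring
              rw [this, map_zero, zero_mul]
            map_add' := fun a b => by
              show f (m (a + b)) * ↑u⁻¹ = f (m a) * ↑u⁻¹ + f (m b) * ↑u⁻¹
              have : m (a + b) = m a + m b := by
                apply Subtype.ext; show (a + b) * y = a * y + b * y; ring
              rw [this, map_add, add_mul] }, ?_, ?_, ?_⟩
  · intro a b hab
    simp only [RingHom.coe_mk, MonoidHom.coe_mk, OneHom.coe_mk] at hab
    have h2 : f (m a) = f (m b) := by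
      have := congrArg (· * (↑u : K)) hab
      simpa [mul_assoc, u.inv_mul] using this
    have h3 : m a = m b := finj h2
    have h4 : a * y = b * y := congrArg Subtype.val h3
    have h5 : (a - b) * y = 0 := by linear_combination h4
    have := mem_nonZeroDivisors_iff_right.mp hyreg (a - b) h5
    exact sub_eq_zero.mp this
  · intro r
    simp only [RingHom.coe_mk, MonoidHom.coe_mk, OneHom.coe_mk]
    have : m (↑r) = r * ⟨y, hIR hyI⟩ := by apply Subtype.ext; rfl
    rw [this, map_mul, ← hu, mul_assoc, huinv, mul_one]
  · rintro t i ⟨a, haI, rfl⟩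
    refine ⟨⟨t * a, hIR (I.mul_mem_left t haI)⟩, I.mul_mem_left t haI, ?_⟩
    simp only [RingHom.coe_mk, MonoidHom.coe_mk, OneHom.coe_mk]
    have k : f (m t) * f a = f ⟨t * ↑a, hIR (I.mul_mem_left t haI)⟩ * ↑u := by
      rw [hu, ← map_mul, ← map_mul]
      congr 1
      apply Subtype.ext
      show (t * y) * ↑a = (t * ↑a) * y
      ring
    linear_combination (-(↑u⁻¹) : K) * k - (f ⟨t * ↑a, hIR (I.mul_mem_left t haI)⟩) * huinv
end

section
/- Let R ⊆ T ⊂ U be an extension of integral domains such that Spec(R) = Spec(T). Then R is a pseudo-valuation subring of U if and only if T is a pseudo-valuation subring of U. -/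
/-- A subset `S` of a ring `A` is (the underlying set of) a prime ideal of the subring `B`. -/
def IsPrimeIdealSetOf {A : Type*} [CommRing A] (B : Subring A) (S : Set A) : Prop :=
  ∃ I : Ideal B, I.IsPrime ∧ Subtype.val '' (I : Set B) = S

/-- `Spec(R) = Spec(T)` for two subrings of a common ring: a subset is a prime ideal of `R`
iff it is a prime ideal of `T`. -/
def SpecEqSub {A : Type*} [CommRing A] (R T : Subring A) : Prop :=
  ∀ S : Set A, IsPrimeIdealSetOf R S ↔ IsPrimeIdealSetOf T S

/-- `R` is a pseudo-valuation subring (PV) of the integral domain `U`: for every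
`x ∈ U \ R` and every non-unit `a` of `R`, the element `x⁻¹a` (inverse taken in the
fraction field of `U`) belongs to `R`; equivalently, `a = r * x` for some `r ∈ R`. -/
def IsPVIn {U : Type*} [CommRing U] [IsDomain U] (R : Subring U) : Prop :=
  ∀ x : U, x ∉ R → ∀ a : ↥R, ¬ IsUnit a → ∃ r ∈ R, (a : U) = r * x

/-- Nonunits transfer along one direction of `SpecEqSub`. -/
lemma nonunit_transfer {A : Type*} [CommRing A] {P Q : Subring A}
    (h : ∀ S : Set A, IsPrimeIdealSetOf P S → IsPrimeIdealSetOf Q S)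
    (p : ↥P) (hp : ¬ IsUnit p) :
    ∃ hq : (p : A) ∈ Q, ¬ IsUnit (⟨(p : A), hq⟩ : Q) := by
  obtain ⟨M, hM, hpM⟩ := exists_max_ideal_of_mem_nonunits (mem_nonunits_iff.mpr hp)
  obtain ⟨J, hJ, hJS⟩ := h (Subtype.val '' (M : Set P)) ⟨M, hM.isPrime, rfl⟩
  have hpJ : (p : A) ∈ Subtype.val '' (J : Set Q) := by
    rw [hJS]; exact ⟨p, hpM, rfl⟩
  obtain ⟨b, hbJ, hb⟩ := hpJ
  refine ⟨hb ▸ b.2, fun hu => hJ.ne_top ?_⟩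
  have hbe : (⟨(p : A), hb ▸ b.2⟩ : Q) = b := Subtype.ext hb.symm
  exact Ideal.eq_top_of_isUnit_mem J hbJ (hbe ▸ hu)

/-- Let `R ⊆ T ⊂ U` be an extension of integral domains with
`Spec(R) = Spec(T)`.  Then `R` is a PV in `U` iff `T` is a PV in `U`. -/
theorem stmt1 {U : Type*} [CommRing U] [IsDomain U] (R T : Subring U)
    (hRT : R ≤ T) (hTU : T ≠ ⊤) (hspec : SpecEqSub R T) :
    IsPVIn R ↔ IsPVIn T := by
  have hRtoT := fun S => (hspec S).mp
  have hTtoR := fun S => (hspec S).mpr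
  constructor
  · -- R PV ⇒ T PV
    intro hR x hx a ha
    obtain ⟨haR, haR'⟩ := nonunit_transfer hTtoR a ha
    obtain ⟨r, hr, hre⟩ := hR x (fun h => hx (hRT h)) ⟨(a : U), haR⟩ haR'
    exact ⟨r, hRT hr, hre⟩
  · -- T PV ⇒ R PV
    intro hT x hx a ha
    obtain ⟨haT, haT'⟩ := nonunit_transfer hRtoT a ha
    by_cases hxT : x ∈ T
    · -- x ∈ T \ R, so x must be a unit of T
      have hxu : IsUnit (⟨x, hxT⟩ : T) := by
        by_contra hxu
        obtain ⟨hxR, -⟩ := nonunit_transfer hTtoR ⟨x, hxT⟩ hxu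
        exact hx hxR
      obtain ⟨u, hu⟩ := hxu
      set r : ↥T := ⟨(a : U), haT⟩ * ↑u⁻¹ with hrdef
      have hre : (a : U) = (r : U) * x := by
        have : r * ⟨x, hxT⟩ = ⟨(a : U), haT⟩ := by
          rw [hrdef, mul_assoc, ← hu]
          simp
        calc (a : U) = ((r * ⟨x, hxT⟩ : ↥T) : U) := by rw [this]
          _ = (r : U) * x := rfl
      have hrnu : ¬ IsUnit r := by
        intro hru
        apply haT'
        have : ⟨(a : U), haT⟩ = r * ⟨x, hxT⟩ := by
          apply Subtype.ext; exact hre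
        rw [this]
        exact hru.mul ⟨u, hu⟩
      obtain ⟨hrR, -⟩ := nonunit_transfer hTtoR r hrnu
      exact ⟨(r : U), hrR, hre⟩
    · -- x ∉ T
      obtain ⟨r, hrT, hre⟩ := hT x hxT ⟨(a : U), haT⟩ haT'
      have hrnu : ¬ IsUnit (⟨r, hrT⟩ : T) := by
        intro hru
        obtain ⟨u, hu⟩ := hru
        apply hxT
        have : ((↑u⁻¹ * ⟨(a : U), haT⟩ : ↥T) : U) = x := by
          have h1 : ((↑u⁻¹ : ↥T) : U) * r = 1 := by
            have : ((↑u⁻¹ * ↑u : ↥T) : U) = 1 := by rw [u.inv_mul]; rfl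
            rwa [hu] at this
          show ((↑u⁻¹ : ↥T) : U) * (a : U) = x
          rw [hre, ← mul_assoc, h1, one_mul]
        exact this ▸ (↑u⁻¹ * ⟨(a : U), haT⟩ : ↥T).2
      obtain ⟨hrR, -⟩ := nonunit_transfer hTtoR ⟨r, hrT⟩ hrnu
      exact ⟨r, hrR, hre⟩
end

section
/- Let R be a commutative ring whose nilradical Nil(R) is a divided prime ideal (i.e., R ∈ H). If T is a ring containing R such that Spec(R) = Spec(T), then the nilradical Nil(T) of T is a divided prime ideal of T (i.e., T ∈ H). -/
/-- `Spec(R) = Spec(T)` for a subring `R` of `T`: a subset of `T` is a prime ideal of `T`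
iff it is a prime ideal of `R`. -/
def SpecEq {T : Type*} [CommRing T] (R : Subring T) : Prop :=
  ∀ S : Set T, (∃ J : Ideal T, J.IsPrime ∧ (J : Set T) = S) ↔ IsPrimeIdealSetOf R S
/-- An ideal `P` of `R` is divided if it is comparable with every ideal of `R`. -/
def Ideal.IsDivided {R : Type*} [CommRing R] (P : Ideal R) : Prop :=
  ∀ I : Ideal R, I ≤ P ∨ P ≤ I

/-- `R ∈ H` : the nilradical of `R` is a divided prime ideal. -/
def MemH (R : Type*) [CommRing R] : Prop :=
  (nilradical R).IsPrime ∧ (nilradical R).IsDivided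

/-- If `R ∈ H` and `T` is a ring containing `R` with `Spec(R) = Spec(T)`,
then `T ∈ H`. -/
theorem stmt2 {T : Type*} [CommRing T] (R : Subring T)
    (hR : MemH ↥R) (hspec : SpecEq R) : MemH T := by
  obtain ⟨hP, hD⟩ := hR
  obtain ⟨J, hJ, hJS⟩ := (hspec (Subtype.val '' (nilradical ↥R : Set ↥R))).mpr
    ⟨nilradical ↥R, hP, rfl⟩
  have hcoe : ∀ y : ↥R, y ∈ nilradical ↥R → (y : T) ∈ nilradical T := by
    intro y hy
    obtain ⟨n, hn⟩ := mem_nilradical.mp hy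
    exact mem_nilradical.mpr ⟨n, by exact_mod_cast congrArg Subtype.val hn⟩
  have hnil : nilradical T = J := by
    apply le_antisymm
    · intro x hx
      obtain ⟨n, hn⟩ := mem_nilradical.mp hx
      exact hJ.mem_of_pow_mem n (by rw [hn]; exact J.zero_mem)
    · intro x hx
      have : x ∈ (J : Set T) := hx
      rw [hJS] at this
      obtain ⟨y, hy, rfl⟩ := this
      exact hcoe y hy
  have hprimesub : ∀ M : Ideal T, M.IsPrime → (M : Set T) ⊆ (R : Set T) := by
    intro M hM
    obtain ⟨I, hI, hIS⟩ := (hspec M).mp ⟨M, hM, rfl⟩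
    rw [← hIS]
    rintro x ⟨y, -, rfl⟩
    exact y.2
  constructor
  · rw [hnil]; exact hJ
  · intro I
    by_cases hle : I ≤ nilradical T
    · exact Or.inl hle
    · right
      obtain ⟨a, haI, haN⟩ := SetLike.not_le_iff_exists.mp hle
      by_cases haR : a ∈ R
      · have ha' : (⟨a, haR⟩ : ↥R) ∉ nilradical ↥R := fun h => haN (hcoe _ h)
        rcases hD (Ideal.span {(⟨a, haR⟩ : ↥R)}) with h | h
        · exact absurd (h (Ideal.mem_span_singleton_self _)) ha'
        · intro z hz
          rw [hnil] at hz
          have hz' : z ∈ (J : Set T) := hz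
          rw [hJS] at hz'
          obtain ⟨y, hy, rfl⟩ := hz'
          obtain ⟨r, hr⟩ := Ideal.mem_span_singleton'.mp (h hy)
          have : (y : T) = (r : T) * a := by rw [← hr]; push_cast; ring
          rw [this]
          exact I.mul_mem_left _ haI
      · have hu : IsUnit a := by
          by_contra hnu
          have hsp : Ideal.span {a} ≠ ⊤ := fun h => hnu (Ideal.span_singleton_eq_top.mp h)
          obtain ⟨M, hM, hle'⟩ := Ideal.exists_le_maximal _ hsp
          exact haR (hprimesub M hM.isPrime (hle' (Ideal.mem_span_singleton_self a)))
        rw [Ideal.eq_top_of_isUnit_mem I haI hu]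
        exact le_top
end

section
/- Let R ⊆ T be a ring extension such that R ∈ H and Spec(R) = Spec(T). Then R is a φ-pseudo-valuation ring if and only if T is a φ-pseudo-valuation ring. -/
/-- The localization `R_{Nil(R)}` of `R` at its nilradical, given that the nilradical
is prime. -/
abbrev LocAtNil (R : Type*) [CommRing R] (hp : (nilradical R).IsPrime) :=
  Localization (@Ideal.primeCompl R _ (nilradical R) hp)

/-- `φ(S)` : the image in `R_{Nil(R)}` of a subset `S ⊆ R` under the canonical map `r ↦ r/1`
(the restriction to `R` of the homomorphism `φ : T(R) → R_{Nil(R)}`). -/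
def phiImage (R : Type*) [CommRing R] (hp : (nilradical R).IsPrime) (S : Set R) :
    Set (LocAtNil R hp) :=
  algebraMap R (LocAtNil R hp) '' S

/-- An ideal `P` of `R` is φ-strongly prime: for `x, y ∈ R_{Nil(R)}`, `xy ∈ φ(P)` implies
`x ∈ φ(P)` or `y ∈ φ(P)`. -/
def PhiStronglyPrime {R : Type*} [CommRing R] (hp : (nilradical R).IsPrime) (P : Ideal R) :
    Prop :=
  ∀ x y : LocAtNil R hp, x * y ∈ phiImage R hp ↑P →
    x ∈ phiImage R hp ↑P ∨ y ∈ phiImage R hp ↑P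

/-- `R` is a φ-pseudo-valuation ring: `R ∈ H` and every prime ideal of `R` is
φ-strongly prime. -/
def PhiPVR (R : Type*) [CommRing R] : Prop :=
  ∃ h : MemH R, ∀ P : Ideal R, P.IsPrime → PhiStronglyPrime h.1 P

section Aux

variable {T : Type*} [CommRing T] (R : Subring T)

/-- Every non-unit of `T` lies in `R` when `Spec R = Spec T`. -/
theorem SpecEqAux.not_isUnit_mem (hspec : SpecEq R) {t : T} (ht : ¬ IsUnit t) : t ∈ R := by
  obtain ⟨M, hM, hle⟩ := Ideal.exists_le_maximal (Ideal.span {t})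
    (fun h => ht (Ideal.span_singleton_eq_top.mp h))
  obtain ⟨I, _, hIS⟩ := (hspec (M : Set T)).mp ⟨M, hM.isPrime, rfl⟩
  have htM : t ∈ (M : Set T) := hle (Ideal.mem_span_singleton_self t)
  rw [← hIS] at htM
  obtain ⟨r, -, rfl⟩ := htM
  exact r.2

theorem SpecEqAux.mem_nilradical_iff_val {r : ↥R} :
    r ∈ nilradical ↥R ↔ (r : T) ∈ nilradical T := by
  simp only [mem_nilradical]
  constructor
  · rintro ⟨n, hn⟩
    exact ⟨n, by rw [← SubmonoidClass.coe_pow, hn]; rfl⟩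
  · rintro ⟨n, hn⟩
    exact ⟨n, Subtype.ext (by rw [SubmonoidClass.coe_pow]; exact hn)⟩

theorem SpecEqAux.nilradical_set (hspec : SpecEq R) (hR : MemH ↥R) :
    (nilradical T : Set T) = Subtype.val '' ((nilradical ↥R : Ideal ↥R) : Set ↥R) := by
  obtain ⟨J, hJ, hJS⟩ := (hspec _).mpr ⟨nilradical ↥R, hR.1, rfl⟩
  haveI := hJ
  have hEq : nilradical T = J := by
    refine le_antisymm (nilradical_le_prime J) ?_
    intro x hx
    have hx' : x ∈ (J : Set T) := hx
    rw [hJS] at hx'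
    obtain ⟨r, hr, rfl⟩ := hx'
    exact (SpecEqAux.mem_nilradical_iff_val R).mp hr
  rw [hEq, hJS]

theorem SpecEqAux.memH_T (hspec : SpecEq R) (hR : MemH ↥R) : MemH T := by
  have hset := SpecEqAux.nilradical_set R hspec hR
  constructor
  · obtain ⟨J, hJ, hJS⟩ := (hspec _).mpr ⟨nilradical ↥R, hR.1, rfl⟩
    have : nilradical T = J := SetLike.ext' (by rw [hset, hJS])
    rw [this]; exact hJ
  · intro I
    by_cases h : nilradical T ≤ I
    · right; exact h
    · left
      intro t ht
      have hItop : I ≠ ⊤ := fun hI => h (hI ▸ le_top)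
      have htR : t ∈ R := SpecEqAux.not_isUnit_mem R hspec
        (fun hu => hItop (I.eq_top_of_isUnit_mem ht hu))
      rcases hR.2 (I.comap R.subtype) with hJ' | hJ'
      · have hm : (⟨t, htR⟩ : ↥R) ∈ I.comap R.subtype := ht
        have := hJ' hm
        show t ∈ (nilradical T : Set T)
        rw [hset]
        exact ⟨_, this, rfl⟩
      · exfalso
        apply h
        intro x hx
        have hx' : x ∈ (nilradical T : Set T) := hx
        rw [hset] at hx'
        obtain ⟨r, hr, rfl⟩ := hx'
        exact hJ' hr

end Aux


section Loc

variable {T : Type*} [CommRing T] (R : Subring T) (hT : (nilradical T).IsPrime)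

theorem SpecEqAux.val_primeCompl (hR : MemH ↥R) {s : ↥R}
    (hs : s ∈ @Ideal.primeCompl _ _ (nilradical ↥R) hR.1) :
    (s : T) ∈ @Ideal.primeCompl _ _ (nilradical T) hT :=
  fun h => hs ((SpecEqAux.mem_nilradical_iff_val R).mpr h)

/-- The induced map `R_{Nil R} → T_{Nil T}`. -/
noncomputable def SpecEqAux.psi (hR : MemH ↥R) :
    LocAtNil ↥R hR.1 →+* LocAtNil T hT :=
  IsLocalization.lift (M := @Ideal.primeCompl _ _ (nilradical ↥R) hR.1)
    (g := (algebraMap T (LocAtNil T hT)).comp R.subtype)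
    (fun s => by
      have := IsLocalization.map_units (M := @Ideal.primeCompl _ _ (nilradical T) hT)
        (LocAtNil T hT) ⟨((s : ↥R) : T), SpecEqAux.val_primeCompl R hT hR s.2⟩
      simpa using this)

theorem SpecEqAux.psi_comm (hR : MemH ↥R) (a : ↥R) :
    SpecEqAux.psi R hT hR (algebraMap ↥R (LocAtNil ↥R hR.1) a) =
      algebraMap T (LocAtNil T hT) (a : T) := by
  have := IsLocalization.lift_eq (M := @Ideal.primeCompl _ _ (nilradical ↥R) hR.1)
    (S := LocAtNil ↥R hR.1)
    (g := (algebraMap T (LocAtNil T hT)).comp R.subtype)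
    (fun s => by
      have := IsLocalization.map_units (M := @Ideal.primeCompl _ _ (nilradical T) hT)
        (LocAtNil T hT) ⟨((s : ↥R) : T), SpecEqAux.val_primeCompl R hT hR s.2⟩
      simpa using this) a
  exact this

theorem SpecEqAux.psi_inj (hspec : SpecEq R) (hR : MemH ↥R) :
    Function.Injective (SpecEqAux.psi R hT hR) := by
  rw [injective_iff_map_eq_zero]
  intro x hx
  obtain ⟨⟨a, s⟩, rfl⟩ := IsLocalization.mk'_surjective
    (M := @Ideal.primeCompl _ _ (nilradical ↥R) hR.1) x
  dsimp only at hx ⊢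
  have h1 : SpecEqAux.psi R hT hR (algebraMap ↥R (LocAtNil ↥R hR.1) a) = 0 := by
    rw [← IsLocalization.mk'_spec (LocAtNil ↥R hR.1) a s, map_mul, hx, zero_mul]
  rw [SpecEqAux.psi_comm] at h1
  rw [IsLocalization.map_eq_zero_iff (@Ideal.primeCompl _ _ (nilradical T) hT)] at h1
  obtain ⟨⟨u, hu⟩, hua⟩ := h1
  have ha0 : algebraMap ↥R (LocAtNil ↥R hR.1) a = 0 := by
    by_cases huR : u ∈ R
    · rw [IsLocalization.map_eq_zero_iff (@Ideal.primeCompl _ _ (nilradical ↥R) hR.1)]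
      refine ⟨⟨⟨u, huR⟩, fun hmem => hu ((SpecEqAux.mem_nilradical_iff_val R).mp hmem)⟩, ?_⟩
      exact Subtype.ext hua
    · have huU : IsUnit u := by
        by_contra h
        exact huR (SpecEqAux.not_isUnit_mem R hspec h)
      have hA : (a : T) = 0 := huU.mul_left_cancel (hua.trans (mul_zero u).symm)
      have : a = 0 := Subtype.ext hA
      rw [this, map_zero]
  have hunit := IsLocalization.map_units (LocAtNil ↥R hR.1) s
  have := IsLocalization.mk'_spec (LocAtNil ↥R hR.1) a s
  rw [ha0] at this
  exact (hunit.mul_left_eq_zero).mp this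

theorem SpecEqAux.psi_image (hR : MemH ↥R) (P : Set ↥R) :
    SpecEqAux.psi R hT hR '' phiImage ↥R hR.1 P = phiImage T hT (Subtype.val '' P) := by
  unfold phiImage
  rw [← Set.image_comp, ← Set.image_comp]
  apply Set.image_congr
  intro a _
  exact SpecEqAux.psi_comm R hT hR a

theorem SpecEqAux.decomp (hspec : SpecEq R) (hR : MemH ↥R) (x : LocAtNil T hT) :
    (∃ a s : ↥R, s ∉ nilradical ↥R ∧
      x * algebraMap T (LocAtNil T hT) (s : T) = algebraMap T (LocAtNil T hT) (a : T)) ∨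
    (∃ w : T, x * algebraMap T (LocAtNil T hT) w = 1) := by
  obtain ⟨⟨t, u⟩, rfl⟩ := IsLocalization.mk'_surjective
    (M := @Ideal.primeCompl _ _ (nilradical T) hT) x
  dsimp only
  by_cases ht : IsUnit t
  · right
    obtain ⟨v, hv⟩ := ht
    refine ⟨↑v⁻¹ * ↑u, ?_⟩
    rw [map_mul, mul_comm ((algebraMap T (LocAtNil T hT)) (↑v⁻¹ : T)) _, ← mul_assoc,
      IsLocalization.mk'_spec, ← map_mul, ← hv, Units.mul_inv, map_one]
  · have htR : t ∈ R := SpecEqAux.not_isUnit_mem R hspec ht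
    by_cases hu : (u : T) ∈ R
    · left
      refine ⟨⟨t, htR⟩, ⟨(u : T), hu⟩, ?_, ?_⟩
      · intro hmem
        exact u.2 ((SpecEqAux.mem_nilradical_iff_val R).mp hmem)
      · exact IsLocalization.mk'_spec _ t u
    · have huU : IsUnit (u : T) := by
        by_contra h
        exact hu (SpecEqAux.not_isUnit_mem R hspec h)
      obtain ⟨v, hv⟩ := huU
      have h1 : ¬ IsUnit (t * ↑v⁻¹) := fun h => ht (by
        have : t = (t * ↑v⁻¹) * ↑v := by rw [mul_assoc, Units.inv_mul, mul_one]
        rw [this]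
        exact h.mul v.isUnit)
      have h2 : t * ↑v⁻¹ ∈ R := SpecEqAux.not_isUnit_mem R hspec h1
      left
      refine ⟨⟨_, h2⟩, 1, ?_, ?_⟩
      · intro hm
        exact hR.1.ne_top (Ideal.eq_top_of_isUnit_mem _ hm isUnit_one)
      · rw [OneMemClass.coe_one, map_one, mul_one, IsLocalization.mk'_eq_iff_eq_mul, ← map_mul]
        congr 1
        rw [mul_assoc, ← hv, Units.inv_mul, mul_one]

theorem SpecEqAux.transport (hspec : SpecEq R) (hR : MemH ↥R)
    (P : Ideal ↥R) (_hP : P.IsPrime) (Q : Ideal T)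
    (hQs : (Q : Set T) = Subtype.val '' (P : Set ↥R)) :
    PhiStronglyPrime hR.1 P ↔ PhiStronglyPrime hT Q := by
  have himg : SpecEqAux.psi R hT hR '' phiImage ↥R hR.1 ↑P = phiImage T hT ↑Q := by
    rw [show (↑Q : Set T) = Subtype.val '' (P : Set ↥R) from hQs]
    exact SpecEqAux.psi_image R hT hR ↑P
  have hinj := SpecEqAux.psi_inj R hT hspec hR
  constructor
  · intro hsp x y hxy
    rcases SpecEqAux.decomp R hT hspec hR x with ⟨a, s, hs, hxs⟩ | ⟨w, hw⟩
    · rcases SpecEqAux.decomp R hT hspec hR y with ⟨a', s', hs', hys⟩ | ⟨w, hw⟩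
      · -- both come from R via psi
        set x' := IsLocalization.mk' (LocAtNil ↥R hR.1) a
          (⟨s, hs⟩ : @Ideal.primeCompl _ _ (nilradical ↥R) hR.1) with hx'def
        set y' := IsLocalization.mk' (LocAtNil ↥R hR.1) a'
          (⟨s', hs'⟩ : @Ideal.primeCompl _ _ (nilradical ↥R) hR.1) with hy'def
        have hux := IsLocalization.map_units (LocAtNil T hT)
          (⟨(s : T), SpecEqAux.val_primeCompl R hT hR hs⟩ :
            @Ideal.primeCompl _ _ (nilradical T) hT)
        have huy := IsLocalization.map_units (LocAtNil T hT)
          (⟨(s' : T), SpecEqAux.val_primeCompl R hT hR hs'⟩ :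
            @Ideal.primeCompl _ _ (nilradical T) hT)
        have hx' : SpecEqAux.psi R hT hR x' = x := by
          apply hux.mul_right_cancel
          have : SpecEqAux.psi R hT hR x' * algebraMap T (LocAtNil T hT) (s : T) =
              algebraMap T (LocAtNil T hT) (a : T) := by
            rw [← SpecEqAux.psi_comm R hT hR s, ← map_mul, hx'def,
              IsLocalization.mk'_spec, SpecEqAux.psi_comm]
          exact this.trans hxs.symm
        have hy' : SpecEqAux.psi R hT hR y' = y := by
          apply huy.mul_right_cancel
          have : SpecEqAux.psi R hT hR y' * algebraMap T (LocAtNil T hT) (s' : T) =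
              algebraMap T (LocAtNil T hT) (a' : T) := by
            rw [← SpecEqAux.psi_comm R hT hR s', ← map_mul, hy'def,
              IsLocalization.mk'_spec, SpecEqAux.psi_comm]
          exact this.trans hys.symm
        have hmem : x' * y' ∈ phiImage ↥R hR.1 ↑P := by
          have hxy' : x * y ∈ SpecEqAux.psi R hT hR '' phiImage ↥R hR.1 ↑P := by
            rw [himg]; exact hxy
          obtain ⟨z, hz, hze⟩ := hxy'
          have : z = x' * y' := hinj (by rw [hze, map_mul, hx', hy'])
          rwa [← this]
        rcases hsp x' y' hmem with h | h
        · left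
          rw [← himg]
          exact ⟨x', h, hx'⟩
        · right
          rw [← himg]
          exact ⟨y', h, hy'⟩
      · -- y is a unit, so x ∈ φ(Q)
        obtain ⟨q, hq, hqe⟩ := hxy
        left
        refine ⟨q * w, Q.mul_mem_right w hq, ?_⟩
        rw [map_mul, hqe, mul_assoc, hw, mul_one]
    · -- x is a unit, so y ∈ φ(Q)
      obtain ⟨q, hq, hqe⟩ := hxy
      right
      refine ⟨q * w, Q.mul_mem_right w hq, ?_⟩
      rw [map_mul, hqe, mul_comm x y, mul_assoc, hw, mul_one]
  · intro hsp x y hxy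
    have h1 : SpecEqAux.psi R hT hR x * SpecEqAux.psi R hT hR y ∈ phiImage T hT ↑Q := by
      rw [← map_mul, ← himg]
      exact Set.mem_image_of_mem _ hxy
    rcases hsp _ _ h1 with h | h
    · left
      rw [← himg] at h
      obtain ⟨z, hz, hze⟩ := h
      rwa [← hinj hze]
    · right
      rw [← himg] at h
      obtain ⟨z, hz, hze⟩ := h
      rwa [← hinj hze]

end Loc

theorem stmt3 {T : Type*} [CommRing T] (R : Subring T)
    (hR : MemH ↥R) (hspec : SpecEq R) : PhiPVR ↥R ↔ PhiPVR T := by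
  have hT := SpecEqAux.memH_T R hspec hR
  constructor
  · rintro ⟨hmem, hall⟩
    refine ⟨hT, fun Q hQ => ?_⟩
    obtain ⟨P, hP, hPs⟩ := (hspec (Q : Set T)).mp ⟨Q, hQ, rfl⟩
    exact (SpecEqAux.transport R hT.1 hspec hR P hP Q hPs.symm).mp (hall P hP)
  · rintro ⟨hmemT, hall⟩
    refine ⟨hR, fun P hP => ?_⟩
    obtain ⟨Q, hQ, hQs⟩ := (hspec _).mpr ⟨P, hP, rfl⟩
    exact (SpecEqAux.transport R hT.1 hspec hR P hP Q hQs).mpr (hall Q hQ)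
end

section
/- Let R ∈ H and let T be a ring containing R properly such that Spec(R) = Spec(T). Then R is a divided ring if and only if T is a divided ring. -/
/-- A ring is divided if every prime ideal of it is divided. -/
def DividedRing (R : Type*) [CommRing R] : Prop :=
  ∀ P : Ideal R, P.IsPrime → P.IsDivided

/-- Every element of `T` outside `R` is a unit of `T`, since every maximal ideal of `T`
is a prime ideal of `R`, hence contained in `R`. -/
lemma unit_of_not_mem {T : Type*} [CommRing T] (R : Subring T) (hspec : SpecEq R)
    {x : T} (hx : x ∉ R) : IsUnit x := by
  by_contra h
  obtain ⟨M, hM, hxM⟩ := (Ideal.span {x}).exists_le_maximal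
    (by simpa [Ideal.span_singleton_eq_top] using h)
  obtain ⟨I, _, hIM⟩ := (hspec M).mp ⟨M, hM.isPrime, rfl⟩
  have hxM' : x ∈ (M : Set T) := hxM (Ideal.subset_span rfl)
  rw [← hIM] at hxM'
  obtain ⟨y, _, hy⟩ := hxM'
  exact hx (hy ▸ y.2)

/-- Let `R ∈ H` and let `T` be a ring properly containing `R` with
`Spec(R) = Spec(T)`.  Then `R` is divided iff `T` is divided. -/
theorem stmt5 {T : Type*} [CommRing T] (R : Subring T)
    (hR : MemH ↥R) (hproper : R ≠ ⊤) (hspec : SpecEq R) :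
    DividedRing ↥R ↔ DividedRing T := by
  constructor
  · intro hdiv Q hQ I
    by_cases hIQ : I ≤ Q
    · exact Or.inl hIQ
    · right
      obtain ⟨x, hxI, hxQ⟩ := SetLike.not_le_iff_exists.mp hIQ
      by_cases hxR : x ∈ R
      · obtain ⟨P, hP, hPQ⟩ := (hspec Q).mp ⟨Q, hQ, rfl⟩
        have hxP : (⟨x, hxR⟩ : R) ∉ P := fun h => hxQ (by
          rw [← SetLike.mem_coe, ← hPQ]; exact ⟨_, h, rfl⟩)
        rcases hdiv P hP (Ideal.span {(⟨x, hxR⟩ : R)}) with h | h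
        · exact absurd (h (Ideal.subset_span rfl)) hxP
        · intro q hq
          have hq' : q ∈ (Q : Set T) := hq
          rw [← hPQ] at hq'
          obtain ⟨p, hp, rfl⟩ := hq'
          obtain ⟨c, hc⟩ := Ideal.mem_span_singleton'.mp (h hp)
          have : (p : T) = (c : T) * x := congrArg Subtype.val hc.symm
          rw [this]
          exact I.mul_mem_left _ hxI
      · have hu := unit_of_not_mem R hspec hxR
        have : I = ⊤ := I.eq_top_of_isUnit_mem hxI hu
        exact this ▸ le_top
  · intro hdiv P hP I
    by_cases hIP : I ≤ P
    · exact Or.inl hIP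
    · right
      obtain ⟨x, hxI, hxP⟩ := SetLike.not_le_iff_exists.mp hIP
      obtain ⟨J, hJ, hJP⟩ := (hspec (Subtype.val '' (P : Set ↥R))).mpr ⟨P, hP, rfl⟩
      have hxJ : (x : T) ∉ J := by
        intro h
        have h' : (x : T) ∈ (J : Set T) := h
        rw [hJP] at h'
        obtain ⟨y, hy, hyx⟩ := h'
        have : y = x := Subtype.val_injective hyx
        exact hxP (this ▸ hy)
      rcases hdiv J hJ (Ideal.span {(x : T)}) with h | h
      · exact absurd (h (Ideal.subset_span rfl)) hxJ
      · intro p hp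
        have hpJ : (p : T) ∈ J := by
          rw [← SetLike.mem_coe, hJP]; exact ⟨p, hp, rfl⟩
        obtain ⟨t, ht⟩ := Ideal.mem_span_singleton'.mp (h hpJ)
        by_cases htR : t ∈ R
        · have : p = x * ⟨t, htR⟩ := by
            apply Subtype.val_injective
            push_cast
            rw [← ht, mul_comm]
          rw [this]
          exact I.mul_mem_right _ hxI
        · obtain ⟨u, hu⟩ := unit_of_not_mem R hspec htR
          have hx' : (x : T) = (p : T) * ↑u⁻¹ := by
            rw [← ht, ← hu, mul_comm (↑u) (x : T), mul_assoc, Units.mul_inv, mul_one]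
          exact absurd (hx' ▸ J.mul_mem_right _ hpJ) hxJ
end

section
/- Let R ∈ H be a local ring with maximal ideal M such that M contains a non-zero-divisor of R. Then the following are equivalent: (1) R is a φ-pseudo-valuation ring; (2) (M : M) is a φ-chained overring of R whose maximal ideal is M; (3) R has a φ-chained overring V such that Spec(R) = Spec(V). -/
/-- `R` is a φ-chained ring: `R ∈ H` and every `x ∈ R_{Nil(R)} \ φ(R)` is invertible with
inverse `x⁻¹ ∈ φ(R)`. -/
def PhiChained (R : Type*) [CommRing R] : Prop :=
  ∃ h : MemH R, ∀ x : LocAtNil R h.1, x ∉ phiImage R h.1 Set.univ →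
    ∃ y ∈ phiImage R h.1 Set.univ, x * y = 1


namespace Stmt6Aux

variable {R : Type*} [CommRing R] [IsLocalRing R]

set_option linter.unusedSectionVars false

lemma f_inj : Function.Injective (algebraMap R (FractionRing R)) :=
  IsFractionRing.injective R _

lemma not_nil_of_reg {s : R} (hs : s ∈ nonZeroDivisors R) : s ∉ nilradical R := by
  rintro ⟨k, hk⟩
  have h0 : (0 : R) ∈ nonZeroDivisors R := hk ▸ pow_mem hs k
  exact one_ne_zero (mem_nonZeroDivisors_iff_right.mp h0 1 (mul_zero 1))

lemma surjK (x : FractionRing R) :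
    ∃ a s : R, s ∈ nonZeroDivisors R ∧ x * algebraMap R (FractionRing R) s
      = algebraMap R (FractionRing R) a := by
  obtain ⟨⟨a, s⟩, h⟩ := IsLocalization.surj (nonZeroDivisors R) x
  exact ⟨a, s, s.2, h⟩

lemma fs_unit {s : R} (hs : s ∈ nonZeroDivisors R) :
    IsUnit (algebraMap R (FractionRing R) s) :=
  IsLocalization.map_units (M := nonZeroDivisors R) (FractionRing R) ⟨s, hs⟩

variable (hp : (nilradical R).IsPrime)

lemma gs_unit {s : R} (hs : s ∉ nilradical R) :
    IsUnit (algebraMap R (LocAtNil R hp) s) :=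
  IsLocalization.map_units (M := (@Ideal.primeCompl R _ (nilradical R) hp)) (LocAtNil R hp)
    ⟨s, hs⟩

noncomputable def phiK : FractionRing R →+* LocAtNil R hp :=
  IsLocalization.lift (M := nonZeroDivisors R) (S := FractionRing R)
    (g := algebraMap R (LocAtNil R hp))
    (fun y => gs_unit hp (not_nil_of_reg y.2))

lemma phiK_f (r : R) : phiK hp (algebraMap R (FractionRing R) r)
    = algebraMap R (LocAtNil R hp) r :=
  IsLocalization.lift_eq (S := FractionRing R)
    (fun y : nonZeroDivisors R => gs_unit hp (not_nil_of_reg y.2)) r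

lemma surjL (z : LocAtNil R hp) :
    ∃ r s : R, s ∉ nilradical R ∧ z * algebraMap R (LocAtNil R hp) s
      = algebraMap R (LocAtNil R hp) r := by
  obtain ⟨⟨a, s⟩, h⟩ := IsLocalization.surj (@Ideal.primeCompl R _ (nilradical R) hp) z
  exact ⟨a, s, s.2, h⟩

lemma gzero_iff (a : R) :
    algebraMap R (LocAtNil R hp) a = 0 ↔ ∃ t, t ∉ nilradical R ∧ t * a = 0 := by
  rw [IsLocalization.map_eq_zero_iff (@Ideal.primeCompl R _ (nilradical R) hp)]
  exact ⟨fun ⟨m, hm⟩ => ⟨m.1, m.2, hm⟩, fun ⟨t, ht, h⟩ => ⟨⟨t, ht⟩, h⟩⟩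

variable (hd : (nilradical R).IsDivided)

include hd hp in
lemma div_fac {s a : R} (hs : s ∉ nilradical R) (ha : a ∈ nilradical R) :
    ∃ n ∈ nilradical R, a = s * n := by
  rcases hd (Ideal.span {s}) with h | h
  · exact absurd (h (Ideal.subset_span rfl)) hs
  · obtain ⟨n, hn⟩ := Ideal.mem_span_singleton.mp (h ha)
    refine ⟨n, ?_, hn⟩
    rcases hp.mem_or_mem (hn ▸ ha) with h' | h'
    · exact absurd h' hs
    · exact h'

include hd hp in
lemma nilK_rep {x : FractionRing R} {a s : R} (hs : s ∈ nonZeroDivisors R)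
    (hxa : x * algebraMap R (FractionRing R) s = algebraMap R (FractionRing R) a)
    (ha : a ∈ nilradical R) : ∃ n ∈ nilradical R, x = algebraMap R (FractionRing R) n := by
  obtain ⟨n, hn, rfl⟩ := div_fac hp hd (not_nil_of_reg hs) ha
  refine ⟨n, hn, ?_⟩
  have : x * algebraMap R (FractionRing R) s
      = algebraMap R (FractionRing R) n * algebraMap R (FractionRing R) s := by
    rw [hxa, map_mul]; ring
  exact (fs_unit hs).mul_right_cancel this

include hd hp in
lemma isNilpotent_K_iff (x : FractionRing R) :
    IsNilpotent x ↔ ∃ n ∈ nilradical R, x = algebraMap R (FractionRing R) n := by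
  constructor
  · rintro ⟨k, hk⟩
    obtain ⟨a, s, hs, hxa⟩ := surjK x
    have ha : a ∈ nilradical R := by
      refine ⟨k, f_inj ?_⟩
      rw [map_pow, ← hxa, mul_pow, hk, zero_mul, map_zero]
    exact nilK_rep hp hd hs hxa ha
  · rintro ⟨n, ⟨k, hk⟩, rfl⟩
    exact ⟨k, by rw [← map_pow, hk, map_zero]⟩

include hd hp in
lemma nilK_mul {x y : FractionRing R} (h : IsNilpotent (x * y)) :
    IsNilpotent x ∨ IsNilpotent y := by
  obtain ⟨a, s, hs, hxa⟩ := surjK x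
  obtain ⟨b, t, ht, hyb⟩ := surjK y
  obtain ⟨k, hk⟩ := h
  have hab : a * b ∈ nilradical R := by
    refine ⟨k, f_inj ?_⟩
    have : algebraMap R (FractionRing R) (a * b) = (x * y) * algebraMap R (FractionRing R) (s * t) := by
      rw [map_mul, map_mul, ← hxa, ← hyb]; ring
    rw [map_pow, this, mul_pow, hk, zero_mul, map_zero]
  rcases hp.mem_or_mem hab with h' | h'
  · obtain ⟨n, hn, rfl⟩ := nilK_rep hp hd hs hxa h'
    exact Or.inl ((isNilpotent_K_iff hp hd _).mpr ⟨n, hn, rfl⟩)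
  · obtain ⟨n, hn, rfl⟩ := nilK_rep hp hd ht hyb h'
    exact Or.inr ((isNilpotent_K_iff hp hd _).mpr ⟨n, hn, rfl⟩)

include hd in
lemma ker_phiK {x : FractionRing R} (hx : phiK hp x = 0) :
    ∃ n ∈ nilradical R, x = algebraMap R (FractionRing R) n
      ∧ algebraMap R (LocAtNil R hp) n = 0 := by
  obtain ⟨a, s, hs, hxa⟩ := surjK x
  have hga : algebraMap R (LocAtNil R hp) a = 0 := by
    have h1 := congrArg (phiK hp) hxa
    rw [map_mul, hx, zero_mul, phiK_f] at h1
    exact h1.symm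
  obtain ⟨t, ht, hta⟩ := (gzero_iff hp a).mp hga
  have ha : a ∈ nilradical R := by
    rcases hp.mem_or_mem (show t * a ∈ nilradical R from hta ▸ (nilradical R).zero_mem)
      with h' | h'
    · exact absurd h' ht
    · exact h'
  obtain ⟨n, hn, rfl⟩ := nilK_rep hp hd hs hxa ha
  refine ⟨n, hn, rfl, ?_⟩
  have hns : n * s = a := f_inj (by rw [map_mul]; exact hxa)
  have h2 : algebraMap R (LocAtNil R hp) n * algebraMap R (LocAtNil R hp) s
      = 0 * algebraMap R (LocAtNil R hp) s := by
    rw [← map_mul, hns, hga, zero_mul]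
  exact (gs_unit hp (not_nil_of_reg hs)).mul_right_cancel h2

include hd in
lemma unit_or_nil_L (z : LocAtNil R hp) :
    IsUnit z ∨ ∃ n ∈ nilradical R, z = algebraMap R (LocAtNil R hp) n := by
  obtain ⟨r, s, hs, hzs⟩ := surjL hp z
  by_cases hr : r ∈ nilradical R
  · obtain ⟨n, hn, rfl⟩ := div_fac hp hd hs hr
    refine Or.inr ⟨n, hn, ?_⟩
    have : z * algebraMap R (LocAtNil R hp) s
        = algebraMap R (LocAtNil R hp) n * algebraMap R (LocAtNil R hp) s := by
      rw [hzs, map_mul]; ring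
    exact (gs_unit hp hs).mul_right_cancel this
  · left
    obtain ⟨u, hu⟩ := gs_unit hp hs
    obtain ⟨v, hv⟩ := gs_unit hp hr
    refine IsUnit.of_mul_eq_one (a := z) (algebraMap R (LocAtNil R hp) s * ↑v⁻¹) ?_
    rw [← mul_assoc, hzs, ← hv, Units.mul_inv]


include hd in
lemma mem_image_of_phi_mem (C : Ideal R) (hC : nilradical R ≤ C) {x : FractionRing R}
    (hx : ∃ c ∈ C, phiK hp x = algebraMap R (LocAtNil R hp) c) :
    ∃ c ∈ C, x = algebraMap R (FractionRing R) c := by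
  obtain ⟨c, hc, hphi⟩ := hx
  have h0 : phiK hp (x - algebraMap R (FractionRing R) c) = 0 := by
    rw [map_sub, hphi, phiK_f, sub_self]
  obtain ⟨n, hn, hxc, -⟩ := ker_phiK hp hd h0
  refine ⟨c + n, C.add_mem hc (hC hn), ?_⟩
  rw [map_add, ← hxc]; ring

/-- Build an ideal of a subring from a subset of the ambient ring. -/
def idealOfSet (A : Type*) [CommRing A] (V : Subring A) (T : Set A) (hT : T ⊆ V)
    (h0 : (0 : A) ∈ T) (hadd : ∀ x y, x ∈ T → y ∈ T → x + y ∈ T)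
    (hmul : ∀ v x, v ∈ V → x ∈ T → v * x ∈ T) : Ideal V where
  carrier := {v : V | (v : A) ∈ T}
  add_mem' := fun hx hy => hadd _ _ hx hy
  zero_mem' := h0
  smul_mem' := fun c x hx => hmul _ _ c.2 hx

lemma idealOfSet_coe (A : Type*) [CommRing A] (V : Subring A) (T : Set A) (hT : T ⊆ V)
    (h0 : (0 : A) ∈ T) (hadd : ∀ x y, x ∈ T → y ∈ T → x + y ∈ T)
    (hmul : ∀ v x, v ∈ V → x ∈ T → v * x ∈ T) :
    Subtype.val '' ((idealOfSet A V T hT h0 hadd hmul : Ideal V) : Set V) = T := by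
  ext x
  constructor
  · rintro ⟨⟨y, hy⟩, hmem, rfl⟩; exact hmem
  · intro hx; exact ⟨⟨x, hT hx⟩, hx, rfl⟩

lemma isPrimeIdealSetOf_iff (A : Type*) [CommRing A] (V : Subring A) (S : Set A) :
    IsPrimeIdealSetOf V S ↔
      S ⊆ V ∧ (0 : A) ∈ S ∧ (∀ x y, x ∈ S → y ∈ S → x + y ∈ S) ∧
      (∀ v x, v ∈ V → x ∈ S → v * x ∈ S) ∧ (1 : A) ∉ S ∧
      (∀ x y, x ∈ V → y ∈ V → x * y ∈ S → x ∈ S ∨ y ∈ S) := by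
  constructor
  · rintro ⟨I, hI, rfl⟩
    refine ⟨?_, ?_, ?_, ?_, ?_, ?_⟩
    · rintro x ⟨y, -, rfl⟩; exact y.2
    · exact ⟨0, I.zero_mem, rfl⟩
    · rintro x y ⟨a, ha, rfl⟩ ⟨b, hb, rfl⟩; exact ⟨a + b, I.add_mem ha hb, rfl⟩
    · rintro v x hv ⟨a, ha, rfl⟩
      exact ⟨⟨v, hv⟩ * a, I.mul_mem_left _ ha, rfl⟩
    · rintro ⟨a, ha, h1⟩
      have : a = 1 := Subtype.ext h1
      exact hI.ne_top (Ideal.eq_top_iff_one I |>.mpr (this ▸ ha))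
    · rintro x y hx hy ⟨a, ha, hxy⟩
      have : (⟨x, hx⟩ : V) * ⟨y, hy⟩ ∈ I := by
        have : (⟨x, hx⟩ : V) * ⟨y, hy⟩ = a := Subtype.ext hxy.symm
        rw [this]; exact ha
      rcases hI.mem_or_mem this with h | h
      · exact Or.inl ⟨_, h, rfl⟩
      · exact Or.inr ⟨_, h, rfl⟩
  · rintro ⟨hSV, h0, hadd, hmul, h1, hpr⟩
    refine ⟨idealOfSet A V S hSV h0 hadd hmul, ?_, idealOfSet_coe A V S hSV h0 hadd hmul⟩
    constructor
    · intro htop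
      exact h1 (by
        have : (1 : V) ∈ idealOfSet A V S hSV h0 hadd hmul := htop ▸ Submodule.mem_top
        exact this)
    · rintro ⟨x, hx⟩ ⟨y, hy⟩ hxy
      exact hpr x y hx hy hxy


lemma subring_nilpotent_iff {A : Type*} [CommRing A] {V : Subring A} (v : V) :
    IsNilpotent v ↔ IsNilpotent (v : A) := by
  constructor
  · rintro ⟨k, hk⟩; exact ⟨k, by rw [← Subring.coe_pow, hk]; rfl⟩
  · rintro ⟨k, hk⟩
    exact ⟨k, by apply Subtype.ext; rw [Subring.coe_pow, hk]; rfl⟩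

lemma mem_nilradical_subring_iff {A : Type*} [CommRing A] {V : Subring A} (v : V) :
    v ∈ nilradical V ↔ IsNilpotent (v : A) := by
  rw [mem_nilradical]; exact subring_nilpotent_iff v

include hp hd in
lemma nilV_prime (V : Subring (FractionRing R)) : (nilradical V).IsPrime := by
  constructor
  · intro htop
    have h1 : (1 : V) ∈ nilradical V := htop ▸ Submodule.mem_top
    have := (mem_nilradical_subring_iff (1 : V)).mp h1
    obtain ⟨n, hn, h⟩ := (isNilpotent_K_iff hp hd _).mp this
    have h1n : (1 : R) = n := f_inj (by rw [map_one]; exact h)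
    have : (1 : R) ∈ nilradical R := h1n ▸ hn
    obtain ⟨k, hk⟩ := this
    exact one_ne_zero (by rwa [one_pow] at hk)
  · intro x y hxy
    rw [mem_nilradical_subring_iff] at hxy ⊢
    rw [mem_nilradical_subring_iff (V := V)]
    have : IsNilpotent ((x : FractionRing R) * y) := by
      have : ((x * y : V) : FractionRing R) = (x : FractionRing R) * y := rfl
      rwa [this] at hxy
    exact nilK_mul hp hd this

include hd in
lemma phi_nilpotent_iff {x : FractionRing R} :
    IsNilpotent (phiK hp x) ↔ IsNilpotent x := by
  constructor
  · rintro ⟨k, hk⟩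
    have : phiK hp (x ^ k) = 0 := by rw [map_pow]; exact hk
    obtain ⟨n, hn, hx, -⟩ := ker_phiK hp hd this
    obtain ⟨m, hm⟩ := hn
    exact ⟨k * m, by rw [pow_mul, hx, ← map_pow, hm, map_zero]⟩
  · rintro ⟨k, hk⟩; exact ⟨k, by rw [← map_pow, hk, map_zero]⟩


include hd in
lemma unit_L_of_not_nilpotent {z : LocAtNil R hp} (h : ¬ IsNilpotent z) : IsUnit z := by
  rcases unit_or_nil_L hp hd z with h' | ⟨n, ⟨k, hk⟩, rfl⟩
  · exact h'
  · exact absurd ⟨k, by rw [← map_pow, hk, map_zero]⟩ h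

include hp hd in
lemma f_not_nilpotent {s : R} (hs : s ∉ nilradical R) :
    ¬ IsNilpotent (algebraMap R (FractionRing R) s) := by
  intro h
  obtain ⟨n, hn, h'⟩ := (isNilpotent_K_iff hp hd _).mp h
  exact hs ((f_inj h') ▸ hn)

include hd in
lemma isLocalization_L (V : Subring (FractionRing R))
    (hRV : (algebraMap R (FractionRing R)).range ≤ V) (hVp : (nilradical V).IsPrime) :
    letI : Algebra V (LocAtNil R hp) := ((phiK hp).comp V.subtype).toAlgebra
    IsLocalization (@Ideal.primeCompl _ _ (nilradical V) hVp) (LocAtNil R hp) := by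
  letI : Algebra V (LocAtNil R hp) := ((phiK hp).comp V.subtype).toAlgebra
  have halg : ∀ v : V, algebraMap V (LocAtNil R hp) v = phiK hp (v : FractionRing R) :=
    fun v => rfl
  refine ⟨⟨?_, ?_, ?_⟩⟩
  · rintro ⟨y, hy⟩
    rw [halg]
    exact unit_L_of_not_nilpotent hp hd (fun hnil =>
      hy ((mem_nilradical_subring_iff y).mpr ((phi_nilpotent_iff hp hd).mp hnil)))
  · intro z
    obtain ⟨r, s, hs, hzs⟩ := surjL hp z
    have hfsV : algebraMap R (FractionRing R) s ∈ V := hRV ⟨s, rfl⟩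
    have hfs_nn : (⟨algebraMap R (FractionRing R) s, hfsV⟩ : V) ∉ nilradical V := by
      rw [mem_nilradical_subring_iff]
      exact f_not_nilpotent hp hd hs
    refine ⟨⟨⟨algebraMap R (FractionRing R) r, hRV ⟨r, rfl⟩⟩,
      ⟨⟨algebraMap R (FractionRing R) s, hfsV⟩, hfs_nn⟩⟩, ?_⟩
    rw [halg, halg]
    simpa [phiK_f] using hzs
  · intro x y hxy
    rw [halg, halg] at hxy
    have h0 : phiK hp ((x : FractionRing R) - (y : FractionRing R)) = 0 := by
      rw [map_sub, hxy, sub_self]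
    obtain ⟨n, hn, hxc, hgn⟩ := ker_phiK hp hd h0
    obtain ⟨t, ht, htn⟩ := (gzero_iff hp n).mp hgn
    have hftV : algebraMap R (FractionRing R) t ∈ V := hRV ⟨t, rfl⟩
    have hft_nn : (⟨algebraMap R (FractionRing R) t, hftV⟩ : V) ∉ nilradical V := by
      rw [mem_nilradical_subring_iff]
      exact f_not_nilpotent hp hd ht
    refine ⟨⟨⟨algebraMap R (FractionRing R) t, hftV⟩, hft_nn⟩, ?_⟩
    apply Subtype.ext
    have : algebraMap R (FractionRing R) t * ((x : FractionRing R) - y) = 0 := by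
      rw [hxc, ← map_mul, htn, map_zero]
    push_cast
    linear_combination this


include hd in
lemma phiChained_iff_cond (V : Subring (FractionRing R))
    (hRV : (algebraMap R (FractionRing R)).range ≤ V) (hmem : MemH V) :
    PhiChained V ↔
      ∀ z : LocAtNil R hp, z ∉ phiK hp '' (V : Set (FractionRing R)) →
        ∃ y ∈ phiK hp '' (V : Set (FractionRing R)), z * y = 1 := by
  haveI hVp : (nilradical V).IsPrime := hmem.1
  letI : Algebra V (LocAtNil R hp) := ((phiK hp).comp V.subtype).toAlgebra
  haveI hloc := isLocalization_L hp hd V hRV hVp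
  have halg : ∀ v : V, algebraMap V (LocAtNil R hp) v = phiK hp (v : FractionRing R) :=
    fun v => rfl
  set e := IsLocalization.algEquiv (@Ideal.primeCompl _ _ (nilradical V) hVp)
    (LocAtNil V hVp) (LocAtNil R hp) with he
  have hecomm : ∀ v : V, e (algebraMap V (LocAtNil V hVp) v) = phiK hp (v : FractionRing R) :=
    fun v => (e.commutes v).trans (halg v)
  have himg : ∀ x : LocAtNil V hVp,
      x ∈ phiImage V hVp Set.univ ↔ e x ∈ phiK hp '' (V : Set (FractionRing R)) := by
    intro x
    constructor
    · rintro ⟨v, -, rfl⟩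
      exact ⟨v, v.2, (hecomm v).symm⟩
    · rintro ⟨w, hw, hww⟩
      refine ⟨⟨w, hw⟩, trivial, ?_⟩
      apply e.injective
      rw [hecomm ⟨w, hw⟩, hww]
  constructor
  · rintro ⟨h, hch⟩ z hz
    obtain ⟨y, hy, hxy⟩ := hch (e.symm z) (by
      intro hmem'
      apply hz
      have : e (e.symm z) ∈ phiK hp '' (V : Set (FractionRing R)) := (himg _).mp hmem'
      rwa [e.apply_symm_apply] at this)
    refine ⟨e y, (himg y).mp hy, ?_⟩
    calc z * e y = e (e.symm z * y) := by rw [map_mul, e.apply_symm_apply]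
    _ = e 1 := by rw [hxy]
    _ = 1 := map_one e
  · intro hcond
    refine ⟨⟨hVp, ?_⟩, ?_⟩
    · -- divided? no: MemH V is hmem
      exact hmem.2
    · intro x hx
      obtain ⟨y, hy, hzy⟩ := hcond (e x) (fun hmem' => hx ((himg x).mpr hmem'))
      obtain ⟨w, hw, rfl⟩ := hy
      refine ⟨algebraMap V (LocAtNil V hVp) ⟨w, hw⟩, ⟨⟨w, hw⟩, trivial, rfl⟩, ?_⟩
      apply e.injective
      rw [map_mul, hecomm ⟨w, hw⟩, map_one]
      exact hzy


lemma isPrimeIdealSetOf_range (P : Ideal R) (hP : P.IsPrime) :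
    IsPrimeIdealSetOf (algebraMap R (FractionRing R)).range
      (algebraMap R (FractionRing R) '' (P : Set R)) := by
  rw [isPrimeIdealSetOf_iff]
  refine ⟨?_, ?_, ?_, ?_, ?_, ?_⟩
  · rintro x ⟨p, -, rfl⟩; exact ⟨p, rfl⟩
  · exact ⟨0, P.zero_mem, map_zero _⟩
  · rintro x y ⟨p, hp', rfl⟩ ⟨q, hq, rfl⟩
    exact ⟨p + q, P.add_mem hp' hq, map_add _ _ _⟩
  · rintro v x ⟨r, rfl⟩ ⟨p, hp', rfl⟩
    exact ⟨r * p, P.mul_mem_left r hp', map_mul _ _ _⟩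
  · rintro ⟨p, hp', h1⟩
    exact hP.ne_top (P.eq_top_iff_one.mpr ((f_inj (h1.trans (map_one _).symm)) ▸ hp'))
  · rintro x y ⟨r, rfl⟩ ⟨r', rfl⟩ ⟨p, hp', hrr⟩
    have : r * r' ∈ P := by
      have : r * r' = p := f_inj (by rw [map_mul]; exact hrr.symm)
      exact this ▸ hp'
    rcases hP.mem_or_mem this with h | h
    · exact Or.inl ⟨r, h, rfl⟩
    · exact Or.inr ⟨r', h, rfl⟩

lemma impl31 (hH : MemH R)
    (h3 : ∃ V : Subring (FractionRing R), (algebraMap R (FractionRing R)).range ≤ V ∧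
      PhiChained V ∧ SpecEqSub (algebraMap R (FractionRing R)).range V) : PhiPVR R := by
  obtain ⟨V, hRV, hch, hspec⟩ := h3
  have hp := hH.1
  have hd := hH.2
  refine ⟨hH, ?_⟩
  intro P hP
  have hmemV : MemH V := hch.choose
  have CL := (phiChained_iff_cond hp hd V hRV hmemV).mp hch
  obtain ⟨hSV, h0, hadd, hmul, h1, hpr⟩ :=
    (isPrimeIdealSetOf_iff _ V _).mp ((hspec _).mp (isPrimeIdealSetOf_range P hP))
  intro x y hxy
  obtain ⟨p, hpP, hgp⟩ := hxy
  by_cases hx : x ∈ phiK hp '' (V : Set (FractionRing R))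
  · by_cases hy : y ∈ phiK hp '' (V : Set (FractionRing R))
    · obtain ⟨a, ha, rfl⟩ := hx
      obtain ⟨b, hb, rfl⟩ := hy
      have h0' : phiK hp (a * b - algebraMap R (FractionRing R) p) = 0 := by
        rw [map_sub, map_mul, phiK_f, hgp, sub_self]
      obtain ⟨n, hn, hab, -⟩ := ker_phiK hp hd h0'
      have habP : a * b ∈ algebraMap R (FractionRing R) '' (P : Set R) := by
        refine ⟨p + n, P.add_mem hpP (nilradical_le_prime P hn), ?_⟩
        rw [map_add]
        have : a * b = algebraMap R (FractionRing R) p + algebraMap R (FractionRing R) n := by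
          rw [← hab]; ring
        exact this.symm
      rcases hpr a b ha hb habP with h | h
      · obtain ⟨q, hq, rfl⟩ := h
        exact Or.inl ⟨q, hq, (phiK_f hp q).symm⟩
      · obtain ⟨q, hq, rfl⟩ := h
        exact Or.inr ⟨q, hq, (phiK_f hp q).symm⟩
  -- x in, y not in
    · obtain ⟨w, hw, hyw⟩ := CL y hy
      obtain ⟨v, hv, rfl⟩ := hw
      refine Or.inl ?_
      have hvp : v * algebraMap R (FractionRing R) p
          ∈ algebraMap R (FractionRing R) '' (P : Set R) :=
        hmul v _ hv ⟨p, hpP, rfl⟩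
      obtain ⟨q, hq, hqe⟩ := hvp
      refine ⟨q, hq, ?_⟩
      calc algebraMap R (LocAtNil R hp) q = phiK hp (v * algebraMap R (FractionRing R) p) := by
            rw [← hqe, phiK_f]
      _ = phiK hp v * algebraMap R (LocAtNil R hp) p := by rw [map_mul, phiK_f]
      _ = phiK hp v * (x * y) := by rw [hgp]
      _ = x * (y * phiK hp v) := by ring
      _ = x := by rw [hyw, mul_one]
  · obtain ⟨w, hw, hxw⟩ := CL x hx
    obtain ⟨v, hv, rfl⟩ := hw
    refine Or.inr ?_
    have hvp : v * algebraMap R (FractionRing R) p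
        ∈ algebraMap R (FractionRing R) '' (P : Set R) :=
      hmul v _ hv ⟨p, hpP, rfl⟩
    obtain ⟨q, hq, hqe⟩ := hvp
    refine ⟨q, hq, ?_⟩
    calc algebraMap R (LocAtNil R hp) q = phiK hp (v * algebraMap R (FractionRing R) p) := by
          rw [← hqe, phiK_f]
    _ = phiK hp v * algebraMap R (LocAtNil R hp) p := by rw [map_mul, phiK_f]
    _ = phiK hp v * (x * y) := by rw [hgp]
    _ = y * (x * phiK hp v) := by ring
    _ = y := by rw [hxw, mul_one]


lemma impl23
    (h2 : ∃ V : Subring (FractionRing R),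
        (V : Set (FractionRing R)) =
          {x | ∀ m ∈ algebraMap R (FractionRing R) '' (IsLocalRing.maximalIdeal R : Set R),
            x * m ∈ algebraMap R (FractionRing R) '' (IsLocalRing.maximalIdeal R : Set R)} ∧
        (algebraMap R (FractionRing R)).range ≤ V ∧ PhiChained V ∧
        ∃ N : Ideal V, N.IsMaximal ∧ (∀ N' : Ideal V, N'.IsMaximal → N' = N) ∧
          Subtype.val '' (N : Set V) =
            algebraMap R (FractionRing R) '' (IsLocalRing.maximalIdeal R : Set R)) :
    ∃ V : Subring (FractionRing R), (algebraMap R (FractionRing R)).range ≤ V ∧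
      PhiChained V ∧ SpecEqSub (algebraMap R (FractionRing R)).range V := by
  classical
  obtain ⟨V, -, hRV, hch, N, hNmax, hNuniq, hNset⟩ := h2
  refine ⟨V, hRV, hch, ?_⟩
  set fM : Set (FractionRing R) :=
    algebraMap R (FractionRing R) '' (IsLocalRing.maximalIdeal R : Set R) with hfM
  have hfM_range : fM ⊆ ((algebraMap R (FractionRing R)).range : Set (FractionRing R)) := by
    rintro x ⟨m, -, rfl⟩; exact ⟨m, rfl⟩
  have hfM_V : fM ⊆ (V : Set (FractionRing R)) := fun x hx => hRV (hfM_range hx)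
  have key0 : ∀ v : V, ¬ IsUnit v → (v : FractionRing R) ∈ fM := by
    intro v hv
    obtain ⟨Q, hQmax, hQ⟩ := Ideal.exists_le_maximal _ (Ideal.span_singleton_ne_top hv)
    have hvN : v ∈ N := (hNuniq Q hQmax) ▸ hQ (Ideal.subset_span rfl)
    exact hNset ▸ ⟨v, hvN, rfl⟩
  have key1 : ∀ v : V, (v : FractionRing R) ∈ fM → ¬ IsUnit v := by
    intro v hv hu
    rw [← hNset] at hv
    obtain ⟨w, hwN, hwv⟩ := hv
    have : v ∈ N := by rwa [show w = v from Subtype.ext hwv] at hwN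
    exact hNmax.ne_top (N.eq_top_of_isUnit_mem this hu)
  intro S
  rw [isPrimeIdealSetOf_iff, isPrimeIdealSetOf_iff]
  constructor
  · -- R' prime set → V prime set
    rintro ⟨hSR, h0, hadd, hmul, h1, hpr⟩
    have hSfM : S ⊆ fM := by
      intro x hx
      obtain ⟨r, hr⟩ := hSR hx
      by_cases hru : IsUnit r
      · exfalso
        obtain ⟨u, hu⟩ := hru
        have : (1 : FractionRing R) ∈ S := by
          have h' := hmul (algebraMap R (FractionRing R) ↑u⁻¹) x ⟨↑u⁻¹, rfl⟩ hx
          rwa [← hr, ← map_mul, show ((↑u⁻¹ : R) * r) = 1 by rw [← hu]; exact Units.inv_mul u,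
            map_one] at h'
        exact h1 this
      · exact ⟨r, hru, hr⟩
    have hSV : S ⊆ (V : Set (FractionRing R)) := fun x hx => hRV (hSR hx)
    have hmulV : ∀ v x, v ∈ V → x ∈ S → v * x ∈ S := by
      intro v x hv hx
      have hxV : x ∈ V := hSV hx
      have hvxV : v * x ∈ V := V.mul_mem hv hxV
      have hvx_nu : ¬ IsUnit (⟨v * x, hvxV⟩ : V) := by
        intro hu
        obtain ⟨w, hw⟩ := isUnit_iff_exists_inv.mp hu
        refine key1 ⟨x, hxV⟩ (hSfM hx) (isUnit_iff_exists_inv.mpr ⟨⟨v, hv⟩ * w, ?_⟩)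
        rw [← mul_assoc, mul_comm (⟨x, hxV⟩ : V) ⟨v, hv⟩,
          show (⟨v, hv⟩ : V) * ⟨x, hxV⟩ = ⟨v * x, hvxV⟩ from rfl, hw]
      obtain ⟨m, hmM, hmeq⟩ := key0 _ hvx_nu
      have hmeq' : algebraMap R (FractionRing R) m = v * x := hmeq
      have hfmV : algebraMap R (FractionRing R) m ∈ V := hfM_V ⟨m, hmM, rfl⟩
      have hvfmV : v * algebraMap R (FractionRing R) m ∈ V := V.mul_mem hv hfmV
      have hfm_nu : ¬ IsUnit (⟨algebraMap R (FractionRing R) m, hfmV⟩ : V) :=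
        key1 _ ⟨m, hmM, rfl⟩
      have hvm_nu : ¬ IsUnit (⟨v * algebraMap R (FractionRing R) m, hvfmV⟩ : V) := by
        intro hu
        obtain ⟨w, hw⟩ := isUnit_iff_exists_inv.mp hu
        refine hfm_nu (isUnit_iff_exists_inv.mpr ⟨⟨v, hv⟩ * w, ?_⟩)
        rw [← mul_assoc, mul_comm (⟨algebraMap R (FractionRing R) m, hfmV⟩ : V) ⟨v, hv⟩,
          show (⟨v, hv⟩ : V) * ⟨algebraMap R (FractionRing R) m, hfmV⟩
            = ⟨v * algebraMap R (FractionRing R) m, hvfmV⟩ from rfl, hw]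
      obtain ⟨m', hm'M, hm'eq⟩ := key0 _ hvm_nu
      have hm'eq' : algebraMap R (FractionRing R) m' = v * algebraMap R (FractionRing R) m :=
        hm'eq
      have hsqS : algebraMap R (FractionRing R) m * algebraMap R (FractionRing R) m ∈ S := by
        have : algebraMap R (FractionRing R) m * algebraMap R (FractionRing R) m
            = algebraMap R (FractionRing R) m' * x := by
          linear_combination (algebraMap R (FractionRing R) m) * hmeq' - x * hm'eq'
        rw [this]
        exact hmul _ _ ⟨m', rfl⟩ hx
      have hfmS : algebraMap R (FractionRing R) m ∈ S := by
        rcases hpr _ _ ⟨m, rfl⟩ ⟨m, rfl⟩ hsqS with h | h <;> exact h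
      rw [← hmeq']
      exact hfmS
    refine ⟨hSV, h0, hadd, hmulV, h1, ?_⟩
    intro x y hxV hyV hxyS
    by_cases hxu : IsUnit (⟨x, hxV⟩ : V)
    · obtain ⟨w, hw⟩ := isUnit_iff_exists_inv.mp hxu
      refine Or.inr ?_
      have hwx : x * (w : FractionRing R) = 1 := congrArg Subtype.val hw
      have h' : (w : FractionRing R) * (x * y) ∈ S := hmulV _ _ w.2 hxyS
      rwa [show (w : FractionRing R) * (x * y) = (x * (w : FractionRing R)) * y by ring,
        hwx, one_mul] at h'
    · by_cases hyu : IsUnit (⟨y, hyV⟩ : V)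
      · obtain ⟨w, hw⟩ := isUnit_iff_exists_inv.mp hyu
        refine Or.inl ?_
        have hwy : y * (w : FractionRing R) = 1 := congrArg Subtype.val hw
        have h' : (w : FractionRing R) * (x * y) ∈ S := hmulV _ _ w.2 hxyS
        rwa [show (w : FractionRing R) * (x * y) = (y * (w : FractionRing R)) * x by ring,
          hwy, one_mul] at h'
      · obtain ⟨r, hrM, hrx⟩ := key0 _ hxu
        obtain ⟨r', hr'M, hr'y⟩ := key0 _ hyu
        exact hpr x y ⟨r, hrx⟩ ⟨r', hr'y⟩ hxyS
  · -- V prime set → R' prime set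
    rintro ⟨hSV, h0, hadd, hmul, h1, hpr⟩
    have hSfM : S ⊆ fM := by
      intro x hx
      have hxV : x ∈ V := hSV hx
      refine key0 ⟨x, hxV⟩ ?_
      intro hu
      obtain ⟨w, hw⟩ := isUnit_iff_exists_inv.mp hu
      have hwx : x * (w : FractionRing R) = 1 := congrArg Subtype.val hw
      have h' := hmul (w : FractionRing R) x w.2 hx
      rw [mul_comm, hwx] at h'
      exact h1 h'
    refine ⟨fun x hx => hfM_range (hSfM hx), h0, hadd, ?_, h1, ?_⟩
    · intro v x hv hx
      exact hmul v x (hRV hv) hx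
    · intro x y hx hy hxy
      exact hpr x y (hRV hx) (hRV hy) hxy


set_option maxHeartbeats 1000000 in
set_option synthInstance.maxHeartbeats 400000 in
open IsLocalRing in
lemma impl12 (hreg : ∃ x ∈ maximalIdeal R, x ∈ nonZeroDivisors R) (h1 : PhiPVR R) :
    ∃ V : Subring (FractionRing R),
      (V : Set (FractionRing R)) =
        {x | ∀ m ∈ algebraMap R (FractionRing R) '' (maximalIdeal R : Set R),
          x * m ∈ algebraMap R (FractionRing R) '' (maximalIdeal R : Set R)} ∧
      (algebraMap R (FractionRing R)).range ≤ V ∧ PhiChained V ∧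
      ∃ N : Ideal V, N.IsMaximal ∧ (∀ N' : Ideal V, N'.IsMaximal → N' = N) ∧
        Subtype.val '' (N : Set V) =
          algebraMap R (FractionRing R) '' (maximalIdeal R : Set R) := by
  classical
  obtain ⟨hmem, hsp⟩ := h1
  have hp := hmem.1
  have hd := hmem.2
  haveI hMmax := IsLocalRing.maximalIdeal.isMaximal R
  haveI hMprime : (maximalIdeal R).IsPrime := hMmax.isPrime
  have hMsp : PhiStronglyPrime hp (maximalIdeal R) := hsp _ hMprime
  set fM : Set (FractionRing R) :=
    algebraMap R (FractionRing R) '' (maximalIdeal R : Set R) with hfMdef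
  have hfM0 : (0 : FractionRing R) ∈ fM := ⟨0, (maximalIdeal R).zero_mem, map_zero _⟩
  have hfMadd : ∀ x y, x ∈ fM → y ∈ fM → x + y ∈ fM := by
    rintro x y ⟨a, ha, rfl⟩ ⟨b, hb, rfl⟩
    exact ⟨a + b, (maximalIdeal R).add_mem ha hb, map_add _ _ _⟩
  have hfMneg : ∀ x, x ∈ fM → -x ∈ fM := by
    rintro x ⟨a, ha, rfl⟩
    exact ⟨-a, (maximalIdeal R).neg_mem ha, map_neg _ _⟩
  have hfMr : ∀ (r : R) (x : FractionRing R), x ∈ fM →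
      algebraMap R (FractionRing R) r * x ∈ fM := by
    rintro r x ⟨a, ha, rfl⟩
    exact ⟨r * a, (maximalIdeal R).mul_mem_left r ha, map_mul _ _ _⟩
  let V : Subring (FractionRing R) :=
    { carrier := {x | ∀ m ∈ fM, x * m ∈ fM},
      one_mem' := fun m hm => by rwa [one_mul],
      mul_mem' := fun {x y} hx hy m hm => by
        rw [mul_assoc]; exact hx _ (hy m hm),
      zero_mem' := fun m hm => by rw [zero_mul]; exact hfM0,
      add_mem' := fun {x y} hx hy m hm => by
        rw [add_mul]; exact hfMadd _ _ (hx m hm) (hy m hm),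
      neg_mem' := fun {x} hx m hm => by
        rw [neg_mul]; exact hfMneg _ (hx m hm) }
  have hmemV_def : ∀ x : FractionRing R, x ∈ V ↔ ∀ m ∈ fM, x * m ∈ fM := fun x => Iff.rfl
  have hRVle : (algebraMap R (FractionRing R)).range ≤ V := by
    rintro y ⟨r, rfl⟩
    exact (hmemV_def _).mpr (fun m hm => hfMr r m hm)
  have hfM_V : fM ⊆ (V : Set (FractionRing R)) := by
    rintro x ⟨m, hm, rfl⟩
    exact hRVle ⟨m, rfl⟩
  have h1fM : (1 : FractionRing R) ∉ fM := by
    rintro ⟨m, hm, hmeq⟩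
    have hm1 : m = 1 := f_inj (hmeq.trans (map_one _).symm)
    exact hMmax.ne_top ((maximalIdeal R).eq_top_iff_one.mpr (hm1 ▸ hm))
  -- core lemma: elements of V outside fM are units of V
  have unit_or_mem : ∀ x : FractionRing R, x ∈ V → x ∉ fM → ∃ w ∈ V, x * w = 1 := by
    intro x hxV hxfM
    have hz : ¬ ∃ m ∈ (maximalIdeal R : Set R),
        algebraMap R (LocAtNil R hp) m = phiK hp x := by
      rintro ⟨m, hm, heq⟩
      obtain ⟨c, hc, hceq⟩ := mem_image_of_phi_mem hp hd (maximalIdeal R)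
        (nilradical_le_prime _) ⟨m, hm, heq.symm⟩
      exact hxfM ⟨c, hc, hceq.symm⟩
    obtain ⟨a, s, hs, hxa⟩ := surjK x
    have hgas : phiK hp x * algebraMap R (LocAtNil R hp) s
        = algebraMap R (LocAtNil R hp) a := by
      have := congrArg (phiK hp) hxa
      rwa [map_mul, phiK_f, phiK_f] at this
    have ha : a ∈ nonZeroDivisors R := by
      by_contra hans
      have hfa_nu : ¬ IsUnit (algebraMap R (FractionRing R) a) := by
        intro hu
        obtain ⟨u, hu'⟩ := hu
        apply hans
        rw [mem_nonZeroDivisors_iff_right]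
        intro c hc
        have h0 : algebraMap R (FractionRing R) c * algebraMap R (FractionRing R) a = 0 := by
          rw [← map_mul, hc, map_zero]
        have : algebraMap R (FractionRing R) c = 0 := by
          calc algebraMap R (FractionRing R) c
              = algebraMap R (FractionRing R) c * (↑u * ↑u⁻¹) := by
                rw [u.mul_inv, mul_one]
          _ = (algebraMap R (FractionRing R) c * algebraMap R (FractionRing R) a) * ↑u⁻¹ := by
                rw [hu']; ring
          _ = 0 := by rw [h0, zero_mul]
        exact f_inj (by rw [this, map_zero])
      obtain ⟨Q, hQmax, hQle⟩ := Ideal.exists_le_maximal _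
        (Ideal.span_singleton_ne_top hfa_nu)
      haveI hQp := hQmax.isPrime
      set P := Q.comap (algebraMap R (FractionRing R)) with hPdef
      haveI hPp : P.IsPrime := Ideal.IsPrime.comap _
      have haP : a ∈ P := hQle (Ideal.subset_span rfl)
      have hsP : s ∉ P := fun hsQ =>
        hQmax.ne_top (Q.eq_top_of_isUnit_mem hsQ (fs_unit hs))
      rcases hsp P hPp (phiK hp x) (algebraMap R (LocAtNil R hp) s)
        ⟨a, haP, hgas.symm⟩ with hzP | hsP'
      · obtain ⟨p, hpP, hpeq⟩ := hzP
        exact hz ⟨p, IsLocalRing.le_maximalIdeal hPp.ne_top hpP, hpeq⟩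
      · obtain ⟨p, hpP, hpeq⟩ := hsP'
        obtain ⟨c, hceq⟩ := IsLocalization.exists_of_eq
          (M := @Ideal.primeCompl R _ (nilradical R) hp) hpeq
        have hsp_nil : s - p ∈ nilradical R := by
          have h0 : (c : R) * (s - p) ∈ nilradical R := by
            have : (c : R) * (s - p) = 0 := by rw [mul_sub, hceq]; ring
            rw [this]; exact (nilradical R).zero_mem
          rcases hp.mem_or_mem h0 with h' | h'
          · exact absurd h' c.2
          · exact h'
        exact hsP (by
          have : s = p + (s - p) := by ring
          rw [this]
          exact P.add_mem hpP (nilradical_le_prime P hsp_nil))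
    obtain ⟨u, hu⟩ := fs_unit ha
    refine ⟨algebraMap R (FractionRing R) s * ↑u⁻¹, ?_, ?_⟩
    · -- w ∈ V
      refine (hmemV_def _).mpr ?_
      rintro _ ⟨m₀, hm₀, rfl⟩
      have hxw1 : x * (algebraMap R (FractionRing R) s * ↑u⁻¹) = 1 := by
        calc x * (algebraMap R (FractionRing R) s * ↑u⁻¹)
            = (x * algebraMap R (FractionRing R) s) * ↑u⁻¹ := by ring
        _ = algebraMap R (FractionRing R) a * ↑u⁻¹ := by rw [hxa]
        _ = ↑u * ↑u⁻¹ := by rw [hu]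
        _ = 1 := u.mul_inv
      have hxwphi : phiK hp x * phiK hp (algebraMap R (FractionRing R) s * ↑u⁻¹) = 1 := by
        rw [← map_mul, hxw1, map_one]
      rcases hMsp (phiK hp x)
        (phiK hp (algebraMap R (FractionRing R) s * ↑u⁻¹)
          * algebraMap R (LocAtNil R hp) m₀)
        ⟨m₀, hm₀, by rw [← mul_assoc, hxwphi, one_mul]⟩ with h | h
      · obtain ⟨m', hm', heq⟩ := h
        exact absurd ⟨m', hm', heq⟩ hz
      · obtain ⟨m', hm', heq⟩ := h
        have hphiw : phiK hp ((algebraMap R (FractionRing R) s * ↑u⁻¹)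
            * algebraMap R (FractionRing R) m₀) = algebraMap R (LocAtNil R hp) m' := by
          rw [map_mul, phiK_f]
          exact heq.symm
        obtain ⟨c, hc, hceq⟩ := mem_image_of_phi_mem hp hd (maximalIdeal R)
          (nilradical_le_prime _) ⟨m', hm', hphiw⟩
        exact ⟨c, hc, hceq.symm⟩
    · calc x * (algebraMap R (FractionRing R) s * ↑u⁻¹)
          = (x * algebraMap R (FractionRing R) s) * ↑u⁻¹ := by ring
      _ = algebraMap R (FractionRing R) a * ↑u⁻¹ := by rw [hxa]
      _ = ↑u * ↑u⁻¹ := by rw [hu]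
      _ = 1 := u.mul_inv
  -- the maximal ideal of V
  have hNmul : ∀ v x : FractionRing R, v ∈ V → x ∈ fM → v * x ∈ fM :=
    fun v x hv hx => (hmemV_def v).mp hv x hx
  set N : Ideal V := idealOfSet (FractionRing R) V fM hfM_V hfM0 hfMadd hNmul with hNdef
  have hNcoe : Subtype.val '' (N : Set V) = fM :=
    idealOfSet_coe (FractionRing R) V fM hfM_V hfM0 hfMadd hNmul
  have hNmem : ∀ v : V, v ∈ N ↔ (v : FractionRing R) ∈ fM := fun v => Iff.rfl
  have hNmax : N.IsMaximal := by
    rw [Ideal.isMaximal_iff]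
    refine ⟨fun h => h1fM ((hNmem 1).mp h), ?_⟩
    intro J x hNJ hxN hxJ
    obtain ⟨w, hwV, hxw⟩ := unit_or_mem _ x.2 (fun h => hxN ((hNmem x).mpr h))
    have hx1 : x * ⟨w, hwV⟩ = 1 := Subtype.ext hxw
    rw [← hx1]
    exact J.mul_mem_right _ hxJ
  have hNuniq : ∀ N' : Ideal V, N'.IsMaximal → N' = N := by
    intro N' hN'
    have hle : N' ≤ N := by
      intro v hv
      by_contra hvN
      obtain ⟨w, hwV, hvw⟩ := unit_or_mem _ v.2 (fun h => hvN ((hNmem v).mpr h))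
      exact hN'.ne_top (N'.eq_top_of_isUnit_mem hv
        (isUnit_iff_exists_inv.mpr ⟨⟨w, hwV⟩, Subtype.ext hvw⟩))
    exact hN'.eq_of_le hNmax.ne_top hle
  -- MemH V
  have hVp : (nilradical V).IsPrime := nilV_prime hp hd V
  have hmemV : MemH V := by
    refine ⟨hVp, ?_⟩
    intro I
    by_cases hI : I ≤ nilradical V
    · exact Or.inl hI
    · refine Or.inr ?_
      rw [SetLike.le_def] at hI
      push_neg at hI
      obtain ⟨v, hvI, hvnil⟩ := hI
      intro η hη
      have hηnil : IsNilpotent (η : FractionRing R) := (mem_nilradical_subring_iff η).mp hη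
      obtain ⟨n, hn, hηeq⟩ := (isNilpotent_K_iff hp hd _).mp hηnil
      by_cases hvu : IsUnit v
      · rw [I.eq_top_of_isUnit_mem hvI hvu]; trivial
      · have hvfM : (v : FractionRing R) ∈ fM := by
          by_contra hvfM
          obtain ⟨w, hwV, hvw⟩ := unit_or_mem _ v.2 hvfM
          exact hvu (isUnit_iff_exists_inv.mpr ⟨⟨w, hwV⟩, Subtype.ext hvw⟩)
        obtain ⟨m, hm, hmeq⟩ := hvfM
        have hmnil : m ∉ nilradical R := by
          intro hmn
          apply hvnil
          rw [mem_nilradical_subring_iff, ← hmeq]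
          exact (isNilpotent_K_iff hp hd _).mpr ⟨m, hmn, rfl⟩
        obtain ⟨b, hb, hnb⟩ := div_fac hp hd hmnil hn
        have hηv : η = v * ⟨algebraMap R (FractionRing R) b, hRVle ⟨b, rfl⟩⟩ := by
          apply Subtype.ext
          show (η : FractionRing R) = (v : FractionRing R) * algebraMap R (FractionRing R) b
          rw [hηeq, hnb, map_mul, hmeq]
        rw [hηv]
        exact I.mul_mem_right _ hvI
  -- φ-chainedness
  have hchain : PhiChained V := by
    refine (phiChained_iff_cond hp hd V hRVle hmemV).mpr ?_
    intro z hz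
    have hzM : ¬ ∃ m ∈ (maximalIdeal R : Set R), algebraMap R (LocAtNil R hp) m = z := by
      rintro ⟨m, hm, rfl⟩
      exact hz ⟨algebraMap R (FractionRing R) m, hfM_V ⟨m, hm, rfl⟩, phiK_f hp m⟩
    have hzu : IsUnit z := by
      rcases unit_or_nil_L hp hd z with h | ⟨n, hn, rfl⟩
      · exact h
      · exact absurd ⟨n, nilradical_le_prime (maximalIdeal R) hn, rfl⟩ hzM
    obtain ⟨z', hzz'⟩ := hzu.exists_right_inv
    have hz'M : ∀ m ∈ maximalIdeal R, ∃ m' ∈ (maximalIdeal R : Set R),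
        algebraMap R (LocAtNil R hp) m' = z' * algebraMap R (LocAtNil R hp) m := by
      intro m hm
      rcases hMsp z (z' * algebraMap R (LocAtNil R hp) m)
        ⟨m, hm, by rw [← mul_assoc, hzz', one_mul]⟩ with h | h
      · obtain ⟨m', hm', heq⟩ := h
        exact absurd ⟨m', hm', heq⟩ hzM
      · exact h
    obtain ⟨x₀, hx₀M, hx₀reg⟩ := hreg
    obtain ⟨m₀, hm₀M, hm₀eq⟩ := hz'M x₀ hx₀M
    obtain ⟨u₀, hu₀⟩ := fs_unit hx₀reg
    have hgx₀u : IsUnit (algebraMap R (LocAtNil R hp) x₀) := gs_unit hp (not_nil_of_reg hx₀reg)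
    have hYx : algebraMap R (FractionRing R) m₀ * ↑u₀⁻¹ * algebraMap R (FractionRing R) x₀
        = algebraMap R (FractionRing R) m₀ := by
      rw [← hu₀, mul_assoc, u₀.inv_mul, mul_one]
    have h1 : phiK hp (algebraMap R (FractionRing R) m₀ * ↑u₀⁻¹)
        * algebraMap R (LocAtNil R hp) x₀ = algebraMap R (LocAtNil R hp) m₀ := by
      have := congrArg (phiK hp) hYx
      rwa [map_mul, phiK_f, phiK_f] at this
    have hphiy' : phiK hp (algebraMap R (FractionRing R) m₀ * ↑u₀⁻¹) = z' := by
      apply hgx₀u.mul_right_cancel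
      rw [h1]
      exact hm₀eq
    have hyV : algebraMap R (FractionRing R) m₀ * ↑u₀⁻¹ ∈ V := by
      refine (hmemV_def _).mpr ?_
      rintro _ ⟨m, hm, rfl⟩
      obtain ⟨m', hm', heq⟩ := hz'M m hm
      have hphi : phiK hp (algebraMap R (FractionRing R) m₀ * ↑u₀⁻¹
          * algebraMap R (FractionRing R) m) = algebraMap R (LocAtNil R hp) m' := by
        rw [map_mul, phiK_f, hphiy']
        exact heq.symm
      obtain ⟨c, hc, hceq⟩ := mem_image_of_phi_mem hp hd (maximalIdeal R)
        (nilradical_le_prime _) ⟨m', hm', hphi⟩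
      exact ⟨c, hc, hceq.symm⟩
    refine ⟨phiK hp (algebraMap R (FractionRing R) m₀ * ↑u₀⁻¹), Set.mem_image_of_mem (phiK hp) hyV, ?_⟩
    rw [hphiy']
    exact hzz'
  exact ⟨V, rfl, hRVle, hchain, N, hNmax, hNuniq, hNcoe⟩

end Stmt6Aux

open IsLocalRing in
/-- Let `R ∈ H` be a local ring whose maximal ideal `M` contains a
non-zero-divisor.  TFAE: (1) `R` is a φ-PVR; (2) `(M : M)` is a φ-chained overring of `R`
whose maximal ideal is `M`; (3) `R` has a φ-chained overring `V` with
`Spec(R) = Spec(V)`. -/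
theorem stmt6 {R : Type*} [CommRing R] [IsLocalRing R] (hH : MemH R)
    (hreg : ∃ x ∈ maximalIdeal R, x ∈ nonZeroDivisors R) :
    List.TFAE [
      PhiPVR R,
      ∃ V : Subring (FractionRing R),
        (V : Set (FractionRing R)) =
          {x | ∀ m ∈ algebraMap R (FractionRing R) '' (maximalIdeal R : Set R),
            x * m ∈ algebraMap R (FractionRing R) '' (maximalIdeal R : Set R)} ∧
        (algebraMap R (FractionRing R)).range ≤ V ∧ PhiChained ↥V ∧
        ∃ N : Ideal ↥V, N.IsMaximal ∧ (∀ N' : Ideal ↥V, N'.IsMaximal → N' = N) ∧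
          Subtype.val '' (N : Set ↥V) =
            algebraMap R (FractionRing R) '' (maximalIdeal R : Set R),
      ∃ V : Subring (FractionRing R), (algebraMap R (FractionRing R)).range ≤ V ∧
        PhiChained ↥V ∧ SpecEqSub (algebraMap R (FractionRing R)).range V] := by
  tfae_have 1 → 2
  · exact fun h1 => Stmt6Aux.impl12 hreg h1
  tfae_have 2 → 3
  · exact Stmt6Aux.impl23
  tfae_have 3 → 1
  · exact Stmt6Aux.impl31 hH
  tfae_finish
end

section
/- Let R ⊆ T be commutative rings such that Spec(R) = Spec(T). Then for each non-maximal prime ideal P of R, the localization R_P equals the localization T_{T\P} (i.e., the canonical map R_P → T_{T\P} is an isomorphism). -/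
/-- Let `R ⊆ T` with `Spec(R) = Spec(T)` and let `P` be a non-maximal
prime ideal of `R`.  Then `R_P = T_{T∖P}`: for the prime ideal `Q` of `T` whose underlying
set is that of `P`, the canonical map `R_P → T_{T∖P}` (induced by the inclusion `R → T`)
is an isomorphism. -/
theorem stmt8 {T : Type*} [CommRing T] (R : Subring T) (hspec : SpecEq R)
    (P : Ideal ↥R) (hP : P.IsPrime) (hPnm : ¬ P.IsMaximal)
    (Q : Ideal T) (hQ : Q.IsPrime)
    (hQP : (Q : Set T) = Subtype.val '' (P : Set ↥R))
    (hle : @Ideal.primeCompl ↥R _ P hP ≤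
      (@Ideal.primeCompl T _ Q hQ).comap R.subtype) :
    Function.Bijective
      (IsLocalization.map (M := @Ideal.primeCompl ↥R _ P hP)
        (T := @Ideal.primeCompl T _ Q hQ)
        (S := Localization (@Ideal.primeCompl ↥R _ P hP))
        (Localization (@Ideal.primeCompl T _ Q hQ)) R.subtype hle) := by
  classical
  haveI := hP
  haveI := hQ
  set Mc : Submonoid ↥R := P.primeCompl with hMc
  set Nc : Submonoid T := Q.primeCompl with hNc
  set L := Localization Nc with hL
  -- every prime ideal of `T` is contained in `R`
  have primes_sub : ∀ J : Ideal T, J.IsPrime → ∀ x ∈ J, x ∈ R := by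
    intro J hJ x hx
    obtain ⟨I, hI, hIS⟩ := (hspec (J : Set T)).mp ⟨J, hJ, rfl⟩
    have : x ∈ (J : Set T) := hx
    rw [← hIS] at this
    obtain ⟨y, -, rfl⟩ := this
    exact y.2
  -- every element of `T` not in `R` is a unit of `T`
  have unit_of_not_mem : ∀ t : T, t ∉ R → IsUnit t := by
    intro t ht
    by_contra h
    obtain ⟨m, hm, htm⟩ := exists_max_ideal_of_mem_nonunits h
    exact ht (primes_sub m hm.isPrime t htm)
  -- membership translation between `Q` and `P`
  have memPQ : ∀ r : ↥R, (r : T) ∈ Q ↔ r ∈ P := by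
    intro r
    constructor
    · intro h
      have h2 : (r : T) ∈ (Q : Set T) := h
      rw [hQP] at h2
      obtain ⟨p, hp, hpe⟩ := h2
      have : p = r := Subtype.ext hpe
      rwa [this] at hp
    · intro h
      show (r : T) ∈ (Q : Set T)
      rw [hQP]
      exact ⟨r, h, rfl⟩
  -- a conductor element: `u ∉ P` with `u • T ⊆ R`
  obtain ⟨u, huP, hu2⟩ : ∃ u : ↥R, u ∉ P ∧ ∀ t : T, (u : T) * t ∈ R := by
    obtain ⟨M, hM, hPM⟩ := P.exists_le_maximal hP.ne_top
    have hne : P ≠ M := fun h => hPnm (h ▸ hM)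
    obtain ⟨u, huM, huP⟩ := SetLike.exists_of_lt (lt_of_le_of_ne hPM hne)
    obtain ⟨J, hJ, hJS⟩ := (hspec (Subtype.val '' (M : Set ↥R))).mpr
      ⟨M, hM.isPrime, rfl⟩
    refine ⟨u, huP, fun t => ?_⟩
    have huJ : (u : T) ∈ J := by
      rw [← SetLike.mem_coe, hJS]; exact ⟨u, huM, rfl⟩
    exact primes_sub J hJ _ (J.mul_mem_right t huJ)
  -- set up `L` as an `R`-algebra via the composite map
  let g : ↥R →+* L := (algebraMap T L).comp R.subtype
  letI : Algebra ↥R L := g.toAlgebra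
  have halg : algebraMap ↥R L = g := rfl
  haveI hloc : IsLocalization Mc L := by
    refine ⟨?_, ?_, ?_⟩
    · rintro ⟨s, hs⟩
      have hs' : (s : T) ∈ Nc := hle hs
      simpa [halg, g] using IsLocalization.map_units L (⟨(s : T), hs'⟩ : Nc)
    · intro z
      obtain ⟨⟨t, s⟩, hz⟩ := IsLocalization.surj Nc z
      have hsQ : (s : T) ∉ Q := s.2
      have husT : (u : T) * (s : T) ∈ R := hu2 s
      have husQ : (⟨(u : T) * s, husT⟩ : ↥R) ∉ P := by
        rw [← memPQ]
        exact fun h => (hQ.mem_or_mem h).elim (fun h' => ((memPQ u).mp h') |> huP) hsQ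
      refine ⟨⟨⟨(u : T) * t, hu2 t⟩, ⟨⟨(u : T) * s, husT⟩, husQ⟩⟩, ?_⟩
      show z * g _ = g _
      simp only [g, RingHom.comp_apply]
      show z * algebraMap T L ((u : T) * s) = algebraMap T L ((u : T) * t)
      rw [map_mul, map_mul, ← mul_assoc, mul_comm z, mul_assoc, hz]
    · intro r₁ r₂ h
      have h' : algebraMap T L (r₁ : T) = algebraMap T L (r₂ : T) := h
      rw [IsLocalization.eq_iff_exists Nc L] at h'
      obtain ⟨c, hc⟩ := h'
      by_cases hcR : (c : T) ∈ R
      · have hcQ : (c : T) ∉ Q := c.2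
        have hcP : (⟨(c : T), hcR⟩ : ↥R) ∉ P := fun h => hcQ ((memPQ _).mpr h)
        refine ⟨⟨⟨(c : T), hcR⟩, hcP⟩, ?_⟩
        exact Subtype.ext hc
      · have hcu := unit_of_not_mem _ hcR
        have : (r₁ : T) = (r₂ : T) := by
          have := hcu.mul_left_cancel hc
          exact this
        exact ⟨1, by rw [Subtype.ext this]⟩
  -- the canonical map agrees with the localization equivalence
  have key : (IsLocalization.map (M := Mc) (T := Nc)
      (S := Localization Mc) L R.subtype hle : Localization Mc →+* L)
      = (IsLocalization.algEquiv Mc (Localization Mc) L : Localization Mc ≃ₐ[↥R] L) := by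
    apply IsLocalization.ringHom_ext Mc
    ext r
    simp only [RingHom.comp_apply]
    rw [IsLocalization.map_eq]
    have : ((IsLocalization.algEquiv Mc (Localization Mc) L : Localization Mc ≃ₐ[↥R] L))
        (algebraMap ↥R (Localization Mc) r) = algebraMap ↥R L r := by
      simp
    exact this.symm
  rw [show (IsLocalization.map (M := Mc) (T := Nc)
      (S := Localization Mc) L R.subtype hle) =
      ((IsLocalization.algEquiv Mc (Localization Mc) L : Localization Mc ≃ₐ[↥R] L) : Localization Mc →+* L) from key]
  exact (IsLocalization.algEquiv Mc (Localization Mc) L).bijective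
end

section
/- Let R be a φ-Prüfer ring such that Nil(R) is not a maximal ideal of R, and let T be a ring containing R such that Spec(R) = Spec(T). Then R = T. -/
/-- A Prüfer ring: every finitely generated ideal containing a non-zero-divisor is
invertible (as a fractional ideal in the total quotient ring). -/
def IsPruferRing (A : Type*) [CommRing A] : Prop :=
  ∀ I : Ideal A, I.FG → (∃ x ∈ I, x ∈ nonZeroDivisors A) →
    ∃ J : FractionalIdeal (nonZeroDivisors A) (FractionRing A),
      (I : FractionalIdeal (nonZeroDivisors A) (FractionRing A)) * J = 1

/-- `R` is a φ-Prüfer ring: `R ∈ H` and `φ(R)` is a Prüfer ring. -/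
def PhiPrufer (R : Type*) [CommRing R] : Prop :=
  ∃ h : MemH R, IsPruferRing ↥(algebraMap R (LocAtNil R h.1)).range

lemma prufer_local_dvd {A : Type*} [CommRing A] [IsLocalRing A] (hPruf : IsPruferRing A)
    (x y : A) (hx_nzd : x ∈ nonZeroDivisors A) :
    (∃ e : A, y = x * e) ∨ (∃ e : A, x = y * e) := by
  set I : Ideal A := Ideal.span {x, y} with hIdef
  have hxI : x ∈ I := Ideal.subset_span (by simp)
  have hyI : y ∈ I := Ideal.subset_span (by simp)
  obtain ⟨J, hJ⟩ := hPruf I (hIdef ▸ Submodule.fg_span ((Set.finite_singleton y).insert x))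
    ⟨x, hxI, hx_nzd⟩
  set K := FractionRing A with hKdef
  set g := algebraMap A K with hgdef
  have hginj : Function.Injective g := IsFractionRing.injective A K
  have h1 : (1 : K) ∈ ((I : FractionalIdeal (nonZeroDivisors A) K) * J) := by
    rw [hJ]; exact FractionalIdeal.mem_one_iff _ |>.mpr ⟨1, map_one _⟩
  have h1' := FractionalIdeal.mem_coe.mpr h1
  rw [FractionalIdeal.coe_mul] at h1'
  have hdecomp : ∃ u v : K, u ∈ J ∧ v ∈ J ∧ (1 : K) = g x * u + g y * v := by
    refine Submodule.mul_induction_on h1' ?_ ?_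
    · intro p hp' q hq
      have hp'' : p ∈ (I : FractionalIdeal (nonZeroDivisors A) K) :=
        FractionalIdeal.mem_coe.mp hp'
      obtain ⟨i, hiI, hip⟩ := FractionalIdeal.mem_coeIdeal _ |>.mp hp''
      obtain ⟨r, s, hrs⟩ := Ideal.mem_span_pair.mp (hIdef ▸ hiI)
      have hq' : q ∈ J := FractionalIdeal.mem_coe.mp hq
      refine ⟨g r * q, g s * q, ?_, ?_, ?_⟩
      · have := Submodule.smul_mem (J : Submodule A K) r hq
        rw [Algebra.smul_def] at this
        exact FractionalIdeal.mem_coe.mp this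
      · have := Submodule.smul_mem (J : Submodule A K) s hq
        rw [Algebra.smul_def] at this
        exact FractionalIdeal.mem_coe.mp this
      · rw [← hip, ← hrs, map_add, map_mul, map_mul]; ring
    · rintro p q ⟨u, v, hu, hv, hpe⟩ ⟨u', v', hu', hv', hqe⟩
      exact ⟨u + u', v + v', Submodule.add_mem _ (FractionalIdeal.mem_coe.mpr hu)
          (FractionalIdeal.mem_coe.mpr hu') |> FractionalIdeal.mem_coe.mp,
        Submodule.add_mem _ (FractionalIdeal.mem_coe.mpr hv)
          (FractionalIdeal.mem_coe.mpr hv') |> FractionalIdeal.mem_coe.mp,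
        by rw [hpe, hqe]; ring⟩
  obtain ⟨u, v, hu, hv, h1eq⟩ := hdecomp
  have hmemA : ∀ (w : A) (z : K), w ∈ I → z ∈ J → ∃ e : A, g e = g w * z := by
    intro w z hw hz
    have : g w * z ∈ ((I : FractionalIdeal (nonZeroDivisors A) K) * J) :=
      FractionalIdeal.mul_mem_mul (FractionalIdeal.mem_coeIdeal _ |>.mpr ⟨w, hw, rfl⟩) hz
    rw [hJ] at this
    exact FractionalIdeal.mem_one_iff _ |>.mp this
  obtain ⟨e₁, he₁⟩ := hmemA x u hxI hu
  obtain ⟨e₂, he₂⟩ := hmemA y v hyI hv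
  obtain ⟨e₃, he₃⟩ := hmemA y u hyI hu
  obtain ⟨e₄, he₄⟩ := hmemA x v hxI hv
  have hsum : e₁ + e₂ = 1 := by
    apply hginj
    rw [map_add, he₁, he₂, map_one, h1eq]
  rcases IsLocalRing.isUnit_or_isUnit_of_add_one hsum with h | h
  · obtain ⟨w, hw⟩ := h
    left
    refine ⟨e₃ * ↑w⁻¹, ?_⟩
    have key : y * e₁ = x * e₃ := by
      apply hginj
      rw [map_mul, map_mul, he₁, he₃]; ring
    calc y = y * (↑w * ↑w⁻¹) := by rw [Units.mul_inv, mul_one]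
      _ = (y * e₁) * ↑w⁻¹ := by rw [hw]; ring
      _ = x * (e₃ * ↑w⁻¹) := by rw [key]; ring
  · obtain ⟨w, hw⟩ := h
    right
    refine ⟨e₄ * ↑w⁻¹, ?_⟩
    have key : x * e₂ = y * e₄ := by
      apply hginj
      rw [map_mul, map_mul, he₂, he₄]; ring
    calc x = x * (↑w * ↑w⁻¹) := by rw [Units.mul_inv, mul_one]
      _ = (x * e₂) * ↑w⁻¹ := by rw [hw]; ring
      _ = y * (e₄ * ↑w⁻¹) := by rw [key]; ring

lemma key10 {R : Type*} [CommRing R] [IsLocalRing R] (hp : (nilradical R).IsPrime)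
    (hPruf : IsPruferRing ↥(algebraMap R (LocAtNil R hp)).range)
    (m a : R) (hm : m ∉ nilradical R) :
    (∃ r : R, a - m * r ∈ nilradical R) ∨ (∃ s : R, m - a * s ∈ nilradical R) := by
  haveI := hp
  set L := LocAtNil R hp with hL
  set f := algebraMap R L with hfdef
  set A := f.range with hAdef
  have hker : ∀ b : R, f b = 0 → b ∈ nilradical R := by
    intro b hb
    obtain ⟨s, hs⟩ := (IsLocalization.map_eq_zero_iff (nilradical R).primeCompl L b).mp hb
    have h0 : (s : R) * b ∈ nilradical R := by rw [hs]; exact (nilradical R).zero_mem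
    exact ((hp.mem_or_mem h0).resolve_left s.2)
  haveI : Nontrivial A := ⟨⟨0, 1, fun h => zero_ne_one (congrArg Subtype.val h)⟩⟩
  haveI : IsLocalRing A := IsLocalRing.of_surjective' f.rangeRestrict f.rangeRestrict_surjective
  set x : A := ⟨f m, ⟨m, rfl⟩⟩ with hxdef
  set y : A := ⟨f a, ⟨a, rfl⟩⟩ with hydef
  have hx_nzd : x ∈ nonZeroDivisors A := by
    suffices H : ∀ z : A, z * x = 0 → z = 0 from
      ⟨fun z hz => H z (by rw [mul_comm]; exact hz), H⟩
    intro z hz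
    obtain ⟨r, hr⟩ := z.2
    have hz1 : f (r * m) = 0 := by
      have := congrArg Subtype.val hz
      simp only [Subring.coe_mul, Subring.coe_zero] at this
      rw [map_mul]
      rw [← hr] at this
      exact this
    obtain ⟨s, hs⟩ := (IsLocalization.map_eq_zero_iff (nilradical R).primeCompl L (r * m)).mp hz1
    have hsm : (s : R) * m ∈ (nilradical R).primeCompl := fun hmem =>
      ((hp.mem_or_mem hmem).elim s.2 hm)
    have hfr : f r = 0 := by
      refine (IsLocalization.map_eq_zero_iff (nilradical R).primeCompl L r).mpr
        ⟨⟨(s : R) * m, hsm⟩, ?_⟩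
      calc ((s:R) * m) * r = (s : R) * (r * m) := by ring
        _ = 0 := hs
    exact Subtype.ext (by simp [← hr, hfr])
  rcases prufer_local_dvd hPruf x y hx_nzd with ⟨e, he⟩ | ⟨e, he⟩
  · obtain ⟨r, hr⟩ := e.2
    left
    refine ⟨r, hker _ ?_⟩
    have hv := congrArg Subtype.val he
    simp only [Subring.coe_mul] at hv
    rw [map_sub, map_mul, sub_eq_zero]
    calc f a = (y : L) := rfl
      _ = (x : L) * (e : L) := hv
      _ = f m * f r := by rw [hr]
  · obtain ⟨r, hr⟩ := e.2
    right
    refine ⟨r, hker _ ?_⟩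
    have hv := congrArg Subtype.val he
    simp only [Subring.coe_mul] at hv
    rw [map_sub, map_mul, sub_eq_zero]
    calc f m = (x : L) := rfl
      _ = (y : L) * (e : L) := hv
      _ = f a * f r := by rw [hr]

/-- Let `R` be a φ-Prüfer ring such that `Nil(R)` is not a maximal ideal
of `R`, and let `T` be a ring containing `R` with `Spec(R) = Spec(T)`.  Then `R = T`. -/
theorem stmt10 {T : Type*} [CommRing T] (R : Subring T)
    (hPruf : PhiPrufer ↥R) (hnm : ¬ (nilradical ↥R).IsMaximal)
    (hspec : SpecEq R) : R = ⊤ := by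
  by_contra hne
  obtain ⟨t, ht⟩ : ∃ t : T, t ∉ R := by
    by_contra hc
    push_neg at hc
    exact hne ((Subring.eq_top_iff' R).mpr hc)
  obtain ⟨h, hA⟩ := hPruf
  have hp : (nilradical ↥R).IsPrime := h.1
  have F1 : ∀ I : Ideal ↥R, I.IsPrime →
      ∃ J : Ideal T, J.IsPrime ∧ (J : Set T) = Subtype.val '' (I : Set ↥R) :=
    fun I hI => (hspec _).mpr ⟨I, hI, rfl⟩
  -- the conductor ideal
  set Ic : Ideal ↥R :=
    { carrier := {r : ↥R | (r : T) * t ∈ R}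
      add_mem' := fun {a b} ha hb => by
        simp only [Set.mem_setOf_eq, Subring.coe_add] at *
        rw [add_mul]; exact R.add_mem ha hb
      zero_mem' := by
        simp only [Set.mem_setOf_eq, Subring.coe_zero, zero_mul]; exact R.zero_mem
      smul_mem' := fun c r hr => by
        simp only [smul_eq_mul, Set.mem_setOf_eq, Subring.coe_mul] at *
        rw [mul_assoc]; exact R.mul_mem c.2 hr } with hIcdef
  have hmax_le : ∀ M : Ideal ↥R, M.IsMaximal → M ≤ Ic := by
    intro M hM r hr
    obtain ⟨J, hJp, hJs⟩ := F1 M hM.isPrime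
    have hrJ : (r : T) ∈ J := by
      rw [← SetLike.mem_coe, hJs]; exact ⟨r, hr, rfl⟩
    have h2 : (r : T) * t ∈ Subtype.val '' (M : Set ↥R) := by
      rw [← hJs]; exact Ideal.mul_mem_right t J hrJ
    obtain ⟨w, _, hw⟩ := h2
    show (r : T) * t ∈ R
    rw [← hw]; exact w.2
  have hIc_ne : Ic ≠ ⊤ := by
    intro hIc
    have h1 : (1 : ↥R) ∈ Ic := hIc ▸ Submodule.mem_top
    have : ((1 : ↥R) : T) * t ∈ R := h1
    rw [OneMemClass.coe_one, one_mul] at this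
    exact ht this
  obtain ⟨M₀, hM₀, hIcM₀⟩ := Ideal.exists_le_maximal Ic hIc_ne
  haveI : IsLocalRing ↥R := IsLocalRing.of_unique_max_ideal
    ⟨M₀, hM₀, fun M hM => hM.eq_of_le hM₀.ne_top (le_trans (hmax_le M hM) hIcM₀)⟩
  -- pick m ∈ M₀ \ Nil(R)
  haveI := hM₀.isPrime
  have hNM : nilradical ↥R ≤ M₀ := nilradical_le_prime M₀
  have hne' : nilradical ↥R ≠ M₀ := fun hEq => hnm (hEq ▸ hM₀)
  obtain ⟨m, hmM, hmN⟩ := SetLike.exists_of_lt (lt_of_le_of_ne hNM hne')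
  -- prime ideals of T corresponding to M₀ and Nil(R)
  obtain ⟨JM, hJMp, hJMs⟩ := F1 M₀ hM₀.isPrime
  obtain ⟨JN, hJNp, hJNs⟩ := F1 _ hp
  have hmJM : (m : T) ∈ JM := by
    rw [← SetLike.mem_coe, hJMs]; exact ⟨m, hmM, rfl⟩
  have hmtJM : (m : T) * t ∈ Subtype.val '' (M₀ : Set ↥R) := by
    rw [← hJMs]; exact Ideal.mul_mem_right t JM hmJM
  obtain ⟨a, haM, hav⟩ := hmtJM
  have hmJN : (m : T) ∉ JN := by
    intro hmem
    rw [← SetLike.mem_coe, hJNs] at hmem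
    obtain ⟨w, hwN, hw⟩ := hmem
    exact hmN (Subtype.val_injective hw ▸ hwN)
  have memJN : ∀ b : ↥R, b ∈ nilradical ↥R → (b : T) ∈ JN := by
    intro b hb
    rw [← SetLike.mem_coe, hJNs]; exact ⟨b, hb, rfl⟩
  rcases key10 hp hA m a hmN with ⟨r, hrN⟩ | ⟨s, hsN⟩
  · -- a = m r + nilpotent :  t ∈ R, contradiction
    have h2 : (m : T) * (t - (r : T)) ∈ JN := by
      have h3 : ((a - m * r : ↥R) : T) ∈ JN := memJN _ hrN
      push_cast at h3
      rw [hav] at h3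
      have : (m : T) * (t - (r : T)) = (m : T) * t - (m : T) * (r : T) := by ring
      rw [this]; exact h3
    have h4 := (hJNp.mem_or_mem h2).resolve_left hmJN
    rw [← SetLike.mem_coe, hJNs] at h4
    obtain ⟨w, _, hw⟩ := h4
    apply ht
    have : t = (t - (r : T)) + (r : T) := by ring
    rw [this, ← hw]
    exact R.add_mem w.2 r.2
  · -- m = a s + nilpotent : t is invertible with inverse in M₀, contradiction
    have h2 : (m : T) * (1 - t * (s : T)) ∈ JN := by
      have h3 : ((m - a * s : ↥R) : T) ∈ JN := memJN _ hsN
      push_cast at h3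
      rw [hav] at h3
      have : (m : T) * (1 - t * (s : T)) = (m : T) - (m : T) * t * (s : T) := by ring
      rw [this]; exact h3
    have h4 := (hJNp.mem_or_mem h2).resolve_left hmJN
    rw [← SetLike.mem_coe, hJNs] at h4
    obtain ⟨n₀, hn₀N, hn₀⟩ := h4
    have hts : t * (s : T) = 1 - (n₀ : T) := by rw [hn₀]; ring
    have hu : IsUnit ((1 : ↥R) - n₀) := (IsNilpotent.isUnit_one_sub hn₀N)
    obtain ⟨w', hw'⟩ := hu
    set c : ↥R := s * ↑w'⁻¹ with hcdef
    have htc : t * (c : T) = 1 := by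
      have h5 : ((1 - n₀ : ↥R) : T) = 1 - (n₀ : T) := by push_cast; ring
      calc t * (c : T) = (t * (s : T)) * ((↑w'⁻¹ : ↥R) : T) := by
            rw [hcdef]; push_cast; ring
        _ = ((1 - n₀ : ↥R) : T) * ((↑w'⁻¹ : ↥R) : T) := by rw [hts, h5]
        _ = (((1 - n₀) * ↑w'⁻¹ : ↥R) : T) := by push_cast; ring
        _ = ((↑w' * ↑w'⁻¹ : ↥R) : T) := by rw [hw']
        _ = ((1 : ↥R) : T) := by rw [Units.mul_inv]
        _ = 1 := by push_cast; ring
    have hcnu : ¬ IsUnit c := by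
      intro hc
      obtain ⟨u, hu'⟩ := hc
      apply ht
      have : t = ((↑u⁻¹ : ↥R) : T) := by
        calc t = t * (((↑u * ↑u⁻¹ : ↥R)) : T) := by rw [Units.mul_inv]; push_cast; ring
          _ = (t * (c : T)) * ((↑u⁻¹ : ↥R) : T) := by rw [← hu']; push_cast; ring
          _ = ((↑u⁻¹ : ↥R) : T) := by rw [htc, one_mul]
      rw [this]
      exact (↑u⁻¹ : ↥R).2
    have hcM₀ : c ∈ M₀ := by
      rw [IsLocalRing.eq_maximalIdeal hM₀]
      exact hcnu
    have hcJM : (c : T) ∈ JM := by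
      rw [← SetLike.mem_coe, hJMs]; exact ⟨c, hcM₀, rfl⟩
    have : (1 : T) ∈ JM := by
      rw [← htc]; exact Ideal.mul_mem_left JM t hcJM
    exact hJMp.ne_top (Ideal.eq_top_iff_one JM |>.mpr this)
end

section
/- Let R ∈ H₀ be an integrally closed local ring such that R ≠ T(R), and assume the maximal ideal M of R is finitely generated. Then there is no ring T properly containing R such that Spec(R) = Spec(T). -/
/-- `R ∈ H₀` : `R ∈ H` and `Nil(R) = Z(R)` (the nilradical is the set of
zero-divisors). -/
def MemH0 (R : Type*) [CommRing R] : Prop :=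
  MemH R ∧ (nilradical R : Set R) = {x : R | x ∉ nonZeroDivisors R}

open Polynomial in
lemma exists_monic_eval₂_smul_eq_zero {R A M : Type*} [CommRing R] [CommRing A]
    [AddCommGroup M] [Module R M] [Module A M] [Algebra R A] [IsScalarTower R A M]
    (N : Submodule R M) (hN : N.FG) (x : A) (hx : ∀ n ∈ N, x • n ∈ N) :
    ∃ p : R[X], p.Monic ∧ ∀ n ∈ N, (Polynomial.eval₂ (algebraMap R A) x p) • n = 0 := by
  haveI : Module.Finite R N := Module.Finite.iff_fg.mpr hN
  let f : Module.End R N :=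
    { toFun := fun n => ⟨x • (n : M), hx _ n.2⟩
      map_add' := fun a b => by ext; simp [smul_add]
      map_smul' := fun r a => by ext; simp [smul_comm r x] }
  obtain ⟨p, hp, hpf⟩ := (Module.End.isIntegral (R := R) (M := N)).isIntegral f
  refine ⟨p, hp, fun n hn => ?_⟩
  have key : ∀ q : R[X], ((Polynomial.aeval f q ⟨n, hn⟩ : N) : M)
      = (Polynomial.eval₂ (algebraMap R A) x q) • n := by
    intro q
    induction q using Polynomial.induction_on' with
    | add a b ha hb => simp [map_add, ha, hb, add_smul]
    | monomial k a =>
        have hfk : ∀ m : N, ((f ^ k) m : M) = x ^ k • (m : M) := by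
          induction k with
          | zero => intro m; simp
          | succ j ih =>
              intro m
              have h1 : (f ^ (j + 1)) m = (f ^ j) (f m) := by
                rw [pow_succ]; rfl
              rw [h1, ih (f m)]
              show x ^ j • (x • (m : M)) = x ^ (j + 1) • (m : M)
              rw [pow_succ, mul_smul]
        rw [Polynomial.aeval_monomial, Polynomial.eval₂_monomial]
        show ((((algebraMap R (Module.End R N)) a * f ^ k) ⟨n, hn⟩ : N) : M) = _
        rw [Module.End.mul_apply, Module.algebraMap_end_apply]
        rw [Submodule.coe_smul, hfk, mul_smul, algebraMap_smul]
  have := key p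
  rw [Polynomial.aeval_def, hpf] at this
  simpa using this.symm

open IsLocalRing in
theorem stmt13' {T : Type*} [CommRing T] (R : Subring T) [IsLocalRing ↥R]
    (h0 : MemH0 ↥R)
    (hic : integralClosure ↥R (FractionRing ↥R) = ⊥)
    (hneq : ¬ Function.Surjective (algebraMap ↥R (FractionRing ↥R)))
    (hfg : (maximalIdeal ↥R).FG)
    (hproper : R ≠ ⊤) : ¬ SpecEq R := by
  intro hspec
  set K := FractionRing ↥R with hK
  -- a regular nonunit s
  obtain ⟨s, hsreg, hsnu⟩ : ∃ s : ↥R, s ∈ nonZeroDivisors ↥R ∧ ¬ IsUnit s := by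
    by_contra h
    push_neg at h
    apply hneq
    intro k
    obtain ⟨⟨r, d⟩, hk⟩ := IsLocalization.surj (nonZeroDivisors ↥R) k
    obtain ⟨u, hu⟩ := h (d : ↥R) d.2
    refine ⟨r * (↑u⁻¹ : ↥R), ?_⟩
    rw [map_mul]
    have hd : algebraMap ↥R K (d : ↥R) * algebraMap ↥R K (↑u⁻¹ : ↥R) = 1 := by
      rw [← map_mul, ← hu, Units.mul_inv, map_one]
    calc algebraMap ↥R K r * algebraMap ↥R K (↑u⁻¹ : ↥R)
        = k * (algebraMap ↥R K (d : ↥R) * algebraMap ↥R K (↑u⁻¹ : ↥R)) := by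
          rw [← mul_assoc, ← hk]
      _ = k := by rw [hd, mul_one]
  have hsM : s ∈ maximalIdeal ↥R := (IsLocalRing.mem_maximalIdeal s).mpr hsnu
  have hs0 : s ≠ 0 := fun h => by
    exact zero_notMem_nonZeroDivisors (h ▸ hsreg)
  -- the maximal ideal of R is an ideal of T
  obtain ⟨J, hJprime, hJ⟩ := (hspec (Subtype.val '' ((maximalIdeal ↥R : Ideal ↥R) : Set ↥R))).mpr
    ⟨maximalIdeal ↥R, (IsLocalRing.maximalIdeal.isMaximal ↥R).isPrime, rfl⟩
  have hsJ : (↑s : T) ∈ J := by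
    rw [← SetLike.mem_coe, hJ]
    exact ⟨s, hsM, rfl⟩
  -- main claim: every element of T lies in R
  have hall : ∀ t : T, t ∈ R := by
    intro t
    -- stable f.g. submodule
    set N : Submodule ↥R T := Submodule.map (Algebra.linearMap ↥R T) (maximalIdeal ↥R) with hN
    have hNfg : N.FG := Submodule.FG.map _ hfg
    have hmemN : ∀ u : T, u ∈ N ↔ ∃ m ∈ maximalIdeal ↥R, (↑m : T) = u := by
      intro u
      constructor
      · rintro ⟨m, hm, rfl⟩; exact ⟨m, hm, rfl⟩
      · rintro ⟨m, hm, rfl⟩; exact ⟨m, hm, rfl⟩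
    have hstab : ∀ u ∈ N, t • u ∈ N := by
      intro u hu
      obtain ⟨m, hm, rfl⟩ := (hmemN u).mp hu
      have : t • (↑m : T) ∈ J := by
        have hmJ : (↑m : T) ∈ J := by
          rw [← SetLike.mem_coe, hJ]; exact ⟨m, hm, rfl⟩
        simpa [smul_eq_mul] using J.mul_mem_left t hmJ
      rw [← SetLike.mem_coe, hJ] at this
      obtain ⟨m', hm', hval⟩ := this
      exact (hmemN _).mpr ⟨m', hm', hval⟩
    obtain ⟨p, hpm, hp⟩ := exists_monic_eval₂_smul_eq_zero N hNfg t hstab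
    have hsN : (↑s : T) ∈ N := (hmemN _).mpr ⟨s, hsM, rfl⟩
    have hEs : Polynomial.eval₂ (algebraMap ↥R T) t p * (↑s : T) = 0 := by
      simpa [smul_eq_mul] using hp (↑s : T) hsN
    -- degree ≥ 1
    have hdeg : p.natDegree ≠ 0 := by
      intro h
      rw [(hpm.natDegree_eq_zero).mp h] at hEs
      simp at hEs
      exact hs0 hEs
    -- x = t * s ∈ R
    have hxJ : t * (↑s : T) ∈ J := J.mul_mem_left t hsJ
    rw [← SetLike.mem_coe, hJ] at hxJ
    obtain ⟨x, hxM, hx⟩ := hxJ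
    -- scaleRoots relation in T
    set q : Polynomial ↥R := p.scaleRoots s with hq
    have hqx : Polynomial.eval x q = 0 := by
      have h1 : Polynomial.eval₂ (algebraMap ↥R T) (algebraMap ↥R T s * t) q
          = algebraMap ↥R T s ^ p.natDegree * Polynomial.eval₂ (algebraMap ↥R T) t p :=
        Polynomial.scaleRoots_eval₂_mul (algebraMap ↥R T) t s
      have h2 : algebraMap ↥R T s * t = algebraMap ↥R T x := by
        show (↑s : T) * t = (↑x : T)
        rw [hx, mul_comm]
      rw [h2, Polynomial.eval₂_at_apply] at h1
      have h3 : algebraMap ↥R T s ^ p.natDegree * Polynomial.eval₂ (algebraMap ↥R T) t p = 0 := by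
        obtain ⟨n, hn⟩ := Nat.exists_eq_succ_of_ne_zero hdeg
        have hEs' : Polynomial.eval₂ (algebraMap ↥R T) t p * (algebraMap ↥R T) s = 0 := hEs
        rw [hn, pow_succ, mul_assoc, mul_comm ((algebraMap ↥R T) s), hEs', mul_zero]
      rw [h3] at h1
      have : Function.Injective (algebraMap ↥R T) := Subtype.val_injective
      exact this (by rw [h1, map_zero])
    -- x / s is integral over R
    set y : K := IsLocalization.mk' K x ⟨s, hsreg⟩ with hy
    have hys : y * algebraMap ↥R K s = algebraMap ↥R K x := IsLocalization.mk'_spec K x ⟨s, hsreg⟩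
    have hyint : Polynomial.eval₂ (algebraMap ↥R K) y p = 0 := by
      have h1 : Polynomial.eval₂ (algebraMap ↥R K) (algebraMap ↥R K s * y) q
          = algebraMap ↥R K s ^ p.natDegree * Polynomial.eval₂ (algebraMap ↥R K) y p :=
        Polynomial.scaleRoots_eval₂_mul (algebraMap ↥R K) y s
      rw [mul_comm, hys, Polynomial.eval₂_at_apply, hqx, map_zero] at h1
      have hu : IsUnit (algebraMap ↥R K s ^ p.natDegree) :=
        (IsLocalization.map_units K (⟨s, hsreg⟩ : nonZeroDivisors ↥R)).pow _
      exact (hu.mul_right_eq_zero).mp h1.symm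
    have : y ∈ integralClosure ↥R K := ⟨p, hpm, hyint⟩
    rw [hic, Algebra.mem_bot] at this
    obtain ⟨r, hr⟩ := this
    -- x = s * r in R
    have hxr : x = s * r := by
      apply IsFractionRing.injective ↥R K
      rw [← hys, ← hr, map_mul, mul_comm]
    -- (t - r) * s = 0 in T
    have hts : (t - (↑r : T)) * (↑s : T) = 0 := by
      have : (↑x : T) = (↑s : T) * (↑r : T) := by
        rw [hxr]; push_cast; ring
      rw [sub_mul, hx] at *
      rw [this]; ring
    -- t - r lies in every maximal ideal containing Ann(s), which is a subset of R
    have htr : t - (↑r : T) ∈ R := by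
      set A : Ideal T := (Submodule.span T {(↑s : T)}).annihilator with hA
      have hmemA : t - (↑r : T) ∈ A :=
        (Submodule.mem_annihilator_span_singleton _ _).mpr (by simpa [smul_eq_mul] using hts)
      have hAne : A ≠ ⊤ := by
        intro h
        have h1 : (1 : T) ∈ A := h ▸ Submodule.mem_top
        have := (Submodule.mem_annihilator_span_singleton (↑s : T) 1).mp h1
        rw [one_smul] at this
        exact hs0 (Subtype.ext this)
      obtain ⟨Jm, hJm, hAJm⟩ := Ideal.exists_le_maximal A hAne
      obtain ⟨I, _, hI⟩ := (hspec (Jm : Set T)).mp ⟨Jm, hJm.isPrime, rfl⟩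
      have : t - (↑r : T) ∈ (Jm : Set T) := hAJm hmemA
      rw [← hI] at this
      obtain ⟨i, _, hi⟩ := this
      exact hi ▸ i.2
    have : t = (t - (↑r : T)) + (↑r : T) := by ring
    rw [this]
    exact R.add_mem htr r.2
  exact hproper (by ext u; simp [hall u])

open IsLocalRing in
/-- Let `R ∈ H₀` be an integrally closed local ring with `R ≠ T(R)` and
finitely generated maximal ideal.  Then there is no ring `T` properly containing `R` with
`Spec(R) = Spec(T)`: for any ring `T` and any realization of `R` as a proper subring of
`T`, `Spec(R) ≠ Spec(T)`. -/
theorem stmt13 {T : Type*} [CommRing T] (R : Subring T) [IsLocalRing ↥R]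
    (h0 : MemH0 ↥R)
    (hic : integralClosure ↥R (FractionRing ↥R) = ⊥)
    (hneq : ¬ Function.Surjective (algebraMap ↥R (FractionRing ↥R)))
    (hfg : (maximalIdeal ↥R).FG)
    (hproper : R ≠ ⊤) : ¬ SpecEq R := by
  exact stmt13' R h0 hic hneq hfg hproper
end

section
/- Let R ∈ H₀ be such that R ≠ T(R). If T is a ring containing R such that Spec(R) = Spec(T), then the complete integral closure of R in T(R) equals the complete integral closure of T in its total quotient ring, i.e., C(R) = C(T). -/
/-- The complete integral closure, inside the total quotient ring of the ambient ring `T`,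
of a subring `R` of `T` : the elements `x` such that `c·xⁿ ∈ R` for all `n ≥ 1`, for some
non-zero-divisor `c` of `R`. -/
def CICin {T : Type*} [CommRing T] (R : Subring T) : Set (FractionRing T) :=
  {x : FractionRing T | ∃ c : ↥R, c ∈ nonZeroDivisors ↥R ∧ ∀ n : ℕ, 1 ≤ n →
    algebraMap T (FractionRing T) ↑c * x ^ n ∈ algebraMap T (FractionRing T) '' (R : Set T)}

/-- Let `R ∈ H₀` with `R ≠ T(R)`.  If `T` is a ring containing `R` with
`Spec(R) = Spec(T)`, then `C(R) = C(T)` (both computed inside the common total quotient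
ring). -/
theorem stmt14 {T : Type*} [CommRing T] (R : Subring T)
    (h0 : MemH0 ↥R)
    (hneq : ¬ Function.Surjective (algebraMap ↥R (FractionRing ↥R)))
    (hspec : SpecEq R) :
    CICin R = {x : FractionRing T | ∃ c ∈ nonZeroDivisors T, ∀ n : ℕ, 1 ≤ n →
      algebraMap T (FractionRing T) c * x ^ n ∈ (algebraMap T (FractionRing T)).range} := by
  classical
  -- R is nontrivial
  haveI hRnt : Nontrivial ↥R := by
    by_contra h
    rw [not_nontrivial_iff_subsingleton] at h
    have h10 : (1 : ↥R) = 0 := Subsingleton.elim _ _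
    have hFR : (1 : FractionRing ↥R) = 0 := by
      calc (1 : FractionRing ↥R) = algebraMap ↥R _ 1 := (map_one _).symm
        _ = algebraMap ↥R _ 0 := by rw [h10]
        _ = 0 := map_zero _
    haveI := subsingleton_of_zero_eq_one hFR.symm
    exact hneq fun z => ⟨0, Subsingleton.elim _ _⟩
  haveI hTnt : Nontrivial T := by
    refine ⟨1, 0, fun h => ?_⟩
    have : (1 : ↥R) = 0 := Subtype.ext (by simpa using h)
    exact one_ne_zero this
  -- there is a nonunit non-zero-divisor in R
  have hb : ∃ b : ↥R, b ∈ nonZeroDivisors ↥R ∧ ¬ IsUnit b := by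
    by_contra h
    push_neg at h
    apply hneq
    intro z
    obtain ⟨⟨r, s⟩, hz⟩ := IsLocalization.surj (nonZeroDivisors ↥R) z
    obtain ⟨v, hv⟩ := (h ↑s s.2).exists_right_inv
    refine ⟨r * v, ?_⟩
    calc algebraMap ↥R (FractionRing ↥R) (r * v)
        = (z * algebraMap ↥R (FractionRing ↥R) ↑s) * algebraMap ↥R (FractionRing ↥R) v := by
          rw [map_mul, hz]
      _ = z * algebraMap ↥R (FractionRing ↥R) (↑s * v) := by rw [map_mul, mul_assoc]
      _ = z := by rw [hv, map_one, mul_one]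
  -- nonunits of T lie in R
  have hnonunitT : ∀ t : T, ¬ IsUnit t → t ∈ R := by
    intro t ht
    obtain ⟨M, hM, htM⟩ := exists_max_ideal_of_mem_nonunits (mem_nonunits_iff.mpr ht)
    obtain ⟨I, _, hI⟩ := (hspec (M : Set T)).mp ⟨M, hM.isPrime, rfl⟩
    have htM' : t ∈ (M : Set T) := htM
    rw [← hI] at htM'
    obtain ⟨r, _, hr⟩ := htM'
    rw [← hr]; exact r.2
  -- nonunits of R are nonunits of T
  have hnonunitR : ∀ b : ↥R, ¬ IsUnit b → ¬ IsUnit (b : T) := by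
    intro b hbnu hbT
    obtain ⟨I, hI, hbI⟩ := exists_max_ideal_of_mem_nonunits (mem_nonunits_iff.mpr hbnu)
    obtain ⟨J, hJ, hJI⟩ := (hspec (Subtype.val '' ((I : Ideal ↥R) : Set ↥R))).mpr
      ⟨I, hI.isPrime, rfl⟩
    have hmem : (b : T) ∈ J := by
      have : (b : T) ∈ (J : Set T) := by rw [hJI]; exact ⟨b, hbI, rfl⟩
      exact this
    exact hJ.ne_top (J.eq_top_of_isUnit_mem hmem hbT)
  -- non-zero-divisors of R are non-zero-divisors of T
  have hnzd : ∀ c : ↥R, c ∈ nonZeroDivisors ↥R → (c : T) ∈ nonZeroDivisors T := by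
    intro c hc
    obtain ⟨J, hJ, hJI⟩ := (hspec _).mpr ⟨nilradical ↥R, h0.1.1, rfl⟩
    rw [mem_nonZeroDivisors_iff_right]
    intro t ht
    have h0J : t * (c : T) ∈ J := by rw [ht]; exact J.zero_mem
    rcases hJ.mem_or_mem h0J with htJ | hcJ
    · have : t ∈ Subtype.val '' ((nilradical ↥R : Ideal ↥R) : Set ↥R) := by
        rw [← hJI]; exact htJ
      obtain ⟨r, _, hr⟩ := this
      have hrc : ((r * c : ↥R) : T) = 0 := by push_cast; rw [hr]; exact ht
      have : r * c = 0 := Subtype.ext (by simpa using hrc)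
      have : r = 0 := (mem_nonZeroDivisors_iff_right.mp hc) r this
      rw [← hr, this]; simp
    · have : (c : T) ∈ Subtype.val '' ((nilradical ↥R : Ideal ↥R) : Set ↥R) := by
        rw [← hJI]; exact hcJ
      obtain ⟨r, hrnil, hr⟩ := this
      have hrc : r = c := Subtype.ext hr
      rw [hrc] at hrnil
      obtain ⟨k, hk⟩ := hrnil
      have : (c : ↥R) ^ k ∈ nonZeroDivisors ↥R := pow_mem hc k
      rw [hk] at this
      exact absurd this (zero_notMem_nonZeroDivisors)
  -- elements of R that are non-zero-divisors in T are non-zero-divisors in R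
  have hnzdR : ∀ r : ↥R, (r : T) ∈ nonZeroDivisors T → r ∈ nonZeroDivisors ↥R := by
    intro r hr
    rw [mem_nonZeroDivisors_iff_right]
    intro z hz
    have hzz : (z : T) * (r : T) = 0 := by
      have := congrArg (Subtype.val) hz; push_cast at this; simpa using this
    exact Subtype.ext (by simpa using (mem_nonZeroDivisors_iff_right.mp hr) (z : T) hzz)
  obtain ⟨b, hbnzd, hbnu⟩ := hb
  -- multiplication by b maps T into R
  have hbmul : ∀ t : T, (b : T) * t ∈ R := by
    intro t
    by_cases htR : t ∈ R
    · exact R.mul_mem b.2 htR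
    · have htu : IsUnit t := by
        by_contra h; exact htR (hnonunitT t h)
      apply hnonunitT
      intro hu
      obtain ⟨u, rfl⟩ := htu
      have : IsUnit ((b : T) * ↑u * ↑u⁻¹) := hu.mul u⁻¹.isUnit
      exact hnonunitR b hbnu (by simpa [mul_assoc] using this)
  ext x
  simp only [CICin, Set.mem_setOf_eq, RingHom.mem_range]
  constructor
  · rintro ⟨c, hc, hpow⟩
    refine ⟨(c : T), hnzd c hc, fun n hn => ?_⟩
    obtain ⟨t, _, ht⟩ := hpow n hn
    exact ⟨t, ht⟩
  · rintro ⟨c, hcT, hpow⟩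
    refine ⟨⟨(b : T) * c, hbmul c⟩, hnzdR _ (mul_mem (hnzd b hbnzd) hcT), fun n hn => ?_⟩
    obtain ⟨t, ht⟩ := hpow n hn
    refine ⟨(b : T) * t, hbmul t, ?_⟩
    show algebraMap T (FractionRing T) ((b : T) * t)
        = algebraMap T (FractionRing T) ((b : T) * c) * x ^ n
    rw [map_mul, ht, map_mul, mul_assoc]
end

section
/- Let R ∈ H₀ be a completely integrally closed ring such that R ≠ T(R). Then there is no ring T properly containing R such that Spec(R) = Spec(T). -/
set_option maxHeartbeats 1000000


/-- `R` is completely integrally closed (in its total quotient ring): every `x ∈ T(R)`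
such that `c·xⁿ ∈ R` for all `n ≥ 1` and some non-zero-divisor `c` of `R` lies in `R`. -/
def CompletelyIntegrallyClosed (R : Type*) [CommRing R] : Prop :=
  ∀ x : FractionRing R,
    (∃ c ∈ nonZeroDivisors R, ∀ n : ℕ, 1 ≤ n →
      algebraMap R (FractionRing R) c * x ^ n ∈ (algebraMap R (FractionRing R)).range) →
    x ∈ (algebraMap R (FractionRing R)).range

/-- Let `R ∈ H₀` be completely integrally closed with `R ≠ T(R)`.  Then
there is no ring `T` properly containing `R` with `Spec(R) = Spec(T)`: for any ring `T`
and any realization of `R` as a proper subring of `T`, `Spec(R) ≠ Spec(T)`. -/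
theorem stmt15 {T : Type*} [CommRing T] (R : Subring T)
    (h0 : MemH0 ↥R)
    (hcic : CompletelyIntegrallyClosed ↥R)
    (hneq : ¬ Function.Surjective (algebraMap ↥R (FractionRing ↥R)))
    (hproper : R ≠ ⊤) : ¬ SpecEq R := by
  intro hspec
  classical
  obtain ⟨⟨hNp, _⟩, hNZ⟩ := h0
  haveI : Nontrivial ↥R := by
    rcases subsingleton_or_nontrivial ↥R with h | h
    · exact absurd (Subsingleton.elim (nilradical ↥R) ⊤) hNp.ne_top
    · exact h
  set F := FractionRing ↥R with hF
  set f := algebraMap ↥R F with hf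
  -- an element outside R
  obtain ⟨t, ht⟩ : ∃ t : T, t ∉ R := by
    by_contra h
    push_neg at h
    exact hproper ((Subring.eq_top_iff' R).mpr h)
  -- a nonunit non-zero-divisor c
  obtain ⟨c, hc, hcu⟩ : ∃ c : ↥R, c ∈ nonZeroDivisors ↥R ∧ ¬ IsUnit c := by
    by_contra h
    push_neg at h
    apply hneq
    intro y
    obtain ⟨⟨a, s⟩, rfl⟩ := IsLocalization.mk'_surjective (nonZeroDivisors ↥R) y
    obtain ⟨u, hu⟩ := h s s.2
    refine ⟨a * ↑u⁻¹, ?_⟩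
    rw [IsLocalization.eq_mk'_iff_mul_eq, ← map_mul]
    congr 1
    rw [← hu]
    simp [mul_assoc]
  -- maximal ideal containing c
  have hspan : Ideal.span {c} ≠ ⊤ := fun h => hcu (Ideal.span_singleton_eq_top.mp h)
  obtain ⟨M, hM, hcM⟩ := Ideal.exists_le_maximal _ hspan
  have hcM' : c ∈ M := hcM (Ideal.mem_span_singleton_self c)
  -- M is a prime ideal of T
  obtain ⟨J, hJp, hJs⟩ := (hspec (Subtype.val '' (M : Set ↥R))).mpr ⟨M, hM.isPrime, rfl⟩
  -- nilradical is a prime ideal of T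
  obtain ⟨K, hKp, hKs⟩ := (hspec (Subtype.val '' ((nilradical ↥R : Ideal ↥R) : Set ↥R))).mpr
    ⟨nilradical ↥R, hNp, rfl⟩
  -- c * t^n ∈ R for all n
  have hmem : ∀ n : ℕ, (↑c * t ^ n : T) ∈ R := by
    intro n
    have h1 : (↑c : T) ∈ (J : Set T) := by
      rw [hJs]; exact ⟨c, hcM', rfl⟩
    have h2 : t ^ n * (↑c : T) ∈ (J : Set T) := J.mul_mem_left _ h1
    rw [hJs] at h2
    obtain ⟨m, _, hm⟩ := h2
    rw [mul_comm, ← hm]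
    exact m.2
  let a : ℕ → ↥R := fun n => ⟨↑c * t ^ n, hmem n⟩
  have haval : ∀ n : ℕ, ((a n : ↥R) : T) = ↑c * t ^ n := fun n => rfl
  have hkey : ∀ n : ℕ, c * (a 1) ^ n = c ^ n * a n := by
    intro n
    apply Subtype.ext
    push_cast [haval]
    rw [mul_pow, pow_one]
    ring
  let x : F := IsLocalization.mk' F (a 1) (⟨c, hc⟩ : nonZeroDivisors ↥R)
  have hxc : x * f c = f (a 1) := IsLocalization.mk'_spec F (a 1) ⟨c, hc⟩
  have halm : ∀ n : ℕ, 1 ≤ n → f c * x ^ n ∈ f.range := by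
    intro n _
    refine ⟨a n, ?_⟩
    have hu := IsLocalization.map_units F (⟨c ^ n, pow_mem hc n⟩ : nonZeroDivisors ↥R)
    apply hu.mul_left_cancel
    have hpow : x ^ n * (f c) ^ n = (f (a 1)) ^ n := by rw [← mul_pow, hxc]
    calc f (c ^ n) * f (a n)
        = f (c ^ n * a n) := by rw [map_mul]
      _ = f (c * (a 1) ^ n) := by rw [hkey]
      _ = f c * (f (a 1)) ^ n := by rw [map_mul, map_pow]
      _ = f c * (x ^ n * (f c) ^ n) := by rw [hpow]
      _ = f (c ^ n) * (f c * x ^ n) := by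
            rw [map_pow, ← mul_assoc, mul_comm (f c ^ n) (f c * x ^ n)]
  obtain ⟨r, hr⟩ := hcic x ⟨c, hc, halm⟩
  -- c * r = a 1
  have hcr : c * r = a 1 := by
    apply IsFractionRing.injective ↥R F
    rw [map_mul, hr, mul_comm, hxc]
  -- so c * (t - r) = 0
  have h1 : (↑c : T) * ↑r = ↑c * t := by
    have h2 := congrArg (Subtype.val : ↥R → T) hcr
    rw [haval 1, pow_one] at h2
    exact_mod_cast h2
  have hzero : (↑c : T) * (t - ↑r) = 0 := by rw [mul_sub, h1, sub_self]
  -- use primality of K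
  have h0K : (↑c : T) * (t - ↑r) ∈ K := by rw [hzero]; exact K.zero_mem
  rcases hKp.mem_or_mem h0K with hcK | htK
  · have hmemK : (↑c : T) ∈ (K : Set T) := hcK
    rw [hKs] at hmemK
    obtain ⟨m, hm1, hm2⟩ := hmemK
    rw [hNZ] at hm1
    have hmc : m = c := Subtype.ext hm2
    rw [hmc] at hm1
    exact hm1 hc
  · have hmemK : (t - ↑r : T) ∈ (K : Set T) := htK
    rw [hKs] at hmemK
    obtain ⟨m, _, hm⟩ := hmemK
    apply ht
    have h3 : t = (t - ↑r) + ↑r := by ring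
    rw [h3, ← hm]
    exact R.add_mem m.2 r.2
end

section
/- Let R be a local ring with maximal ideal M such that M contains a non-zero-divisor of R. Then (R : M) = (M : M) if and only if M is not a principal ideal of R. Moreover, if M = Rr for some r ∈ R, then (R : M) = Rr⁻¹ and (M : M) = R. -/
/-- The colon construction `(J₁ : J₂) = {x ∈ T(R) : x·J₂ ⊆ J₁}` for subsets of the total
quotient ring `T(R)`. -/
def colonSet (R : Type*) [CommRing R] (J₁ J₂ : Set (FractionRing R)) :
    Set (FractionRing R) :=
  {x : FractionRing R | ∀ j ∈ J₂, x * j ∈ J₁}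

/-- The image of `R` in its total quotient ring `T(R)`, as a set. -/
def Rset (R : Type*) [CommRing R] : Set (FractionRing R) :=
  Set.range (algebraMap R (FractionRing R))

/-- The image of an ideal of `R` in the total quotient ring `T(R)`. -/
def idealSet (R : Type*) [CommRing R] (I : Ideal R) : Set (FractionRing R) :=
  algebraMap R (FractionRing R) '' (I : Set R)

/-- An ideal `I` of `R` is divisorial if `I = (R : (R : I))`. -/
def IsDivisorial (R : Type*) [CommRing R] (I : Ideal R) : Prop :=
  idealSet R I = colonSet R (Rset R) (colonSet R (Rset R) (idealSet R I))

open IsLocalRing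

lemma aux_reg {R : Type*} [CommRing R] [IsLocalRing R]
    (hreg : ∃ x ∈ maximalIdeal R, x ∈ nonZeroDivisors R)
    (r : R) (hr : maximalIdeal R = Ideal.span {r}) : r ∈ nonZeroDivisors R := by
  obtain ⟨x, hxM, hxreg⟩ := hreg
  rw [hr, Ideal.mem_span_singleton] at hxM
  obtain ⟨c, hc⟩ := hxM
  have key : ∀ z, z * r = 0 → z = 0 := fun z hz => by
    have h0 : z * x = 0 := by rw [hc, ← mul_assoc, hz, zero_mul]
    exact hxreg.2 _ h0
  exact ⟨fun z hz => key z (by rw [mul_comm]; exact hz), key⟩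

lemma aux_prin {R : Type*} [CommRing R] [IsLocalRing R]
    (hreg : ∃ x ∈ maximalIdeal R, x ∈ nonZeroDivisors R)
    (r : R) (hr : maximalIdeal R = Ideal.span {r}) :
    colonSet R (Rset R) (idealSet R (maximalIdeal R)) =
      {x : FractionRing R | ∃ a : R,
        x = algebraMap R (FractionRing R) a *
          Ring.inverse (algebraMap R (FractionRing R) r)} ∧
    colonSet R (idealSet R (maximalIdeal R)) (idealSet R (maximalIdeal R)) = Rset R := by
  set f := algebraMap R (FractionRing R) with hf
  have inj : Function.Injective f := IsFractionRing.injective R (FractionRing R)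
  have hrreg : r ∈ nonZeroDivisors R := aux_reg hreg r hr
  have hu : IsUnit (f r) := IsLocalization.map_units (FractionRing R) ⟨r, hrreg⟩
  have hrmem : r ∈ maximalIdeal R := hr ▸ Ideal.mem_span_singleton_self r
  constructor
  · ext x
    constructor
    · intro hx
      have : x * f r ∈ Rset R := hx (f r) ⟨r, hrmem, rfl⟩
      obtain ⟨a, ha⟩ := this
      refine ⟨a, ?_⟩
      calc x = x * f r * Ring.inverse (f r) := by
              rw [mul_assoc, Ring.mul_inverse_cancel _ hu, mul_one]
        _ = f a * Ring.inverse (f r) := by rw [ha]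
    · rintro ⟨a, rfl⟩ j ⟨m, hm, rfl⟩
      have hm' : m ∈ maximalIdeal R := hm
      rw [hr, Ideal.mem_span_singleton] at hm'
      obtain ⟨c, rfl⟩ := hm'
      refine ⟨a * c, ?_⟩
      show f (a * c) = f a * Ring.inverse (f r) * f (r * c)
      have hinv : f r * Ring.inverse (f r) = 1 := Ring.mul_inverse_cancel _ hu
      rw [map_mul, map_mul]
      linear_combination (-(f a * f c)) * hinv
  · ext x
    constructor
    · intro hx
      obtain ⟨m, hm, hmx⟩ := hx (f r) ⟨r, hrmem, rfl⟩
      have hm' : m ∈ maximalIdeal R := hm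
      rw [hr, Ideal.mem_span_singleton] at hm'
      obtain ⟨c, rfl⟩ := hm'
      refine ⟨c, ?_⟩
      have h2 : f r * f c = f r * x := by
        rw [← map_mul, hmx]; ring
      exact hu.mul_left_cancel h2
    · rintro ⟨a, rfl⟩ j ⟨m, hm, rfl⟩
      exact ⟨a * m, Ideal.mul_mem_left _ a hm, map_mul f a m⟩


/-- Let `R` be a local ring whose maximal ideal `M` contains a
non-zero-divisor of `R`.  Then `(R : M) = (M : M)` iff `M` is not principal; moreover if
`M = Rr` then `(R : M) = Rr⁻¹` and `(M : M) = R`. -/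
theorem stmt16 {R : Type*} [CommRing R] [IsLocalRing R]
    (hreg : ∃ x ∈ maximalIdeal R, x ∈ nonZeroDivisors R) :
    (colonSet R (Rset R) (idealSet R (maximalIdeal R)) =
        colonSet R (idealSet R (maximalIdeal R)) (idealSet R (maximalIdeal R)) ↔
      ¬ (maximalIdeal R).IsPrincipal) ∧
    ∀ r : R, maximalIdeal R = Ideal.span {r} →
      colonSet R (Rset R) (idealSet R (maximalIdeal R)) =
        {x : FractionRing R | ∃ a : R,
          x = algebraMap R (FractionRing R) a *
            Ring.inverse (algebraMap R (FractionRing R) r)} ∧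
      colonSet R (idealSet R (maximalIdeal R)) (idealSet R (maximalIdeal R)) = Rset R := by
  set f := algebraMap R (FractionRing R) with hf
  have inj : Function.Injective f := IsFractionRing.injective R (FractionRing R)
  refine ⟨⟨?_, ?_⟩, fun r hr => aux_prin hreg r hr⟩
  · -- equality → not principal
    intro heq ⟨r, hr⟩
    rw [Ideal.submodule_span_eq] at hr
    obtain ⟨h1, h2⟩ := aux_prin hreg r hr
    rw [heq, h2] at h1
    have hmem : Ring.inverse (f r) ∈ Rset R := by
      rw [h1]; exact ⟨1, by simp [hf]⟩
    obtain ⟨a, ha⟩ := hmem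
    have hrreg : r ∈ nonZeroDivisors R := aux_reg hreg r hr
    have hu : IsUnit (f r) := IsLocalization.map_units (FractionRing R) ⟨r, hrreg⟩
    have hun : IsUnit r := by
      have h3 : f (a * r) = f 1 := by
        rw [map_mul, ha, map_one, Ring.inverse_mul_cancel _ hu]
      exact IsUnit.of_mul_eq_one a (by rw [mul_comm]; exact inj h3)
    have hrmem : r ∈ maximalIdeal R := hr ▸ Ideal.mem_span_singleton_self r
    exact (mem_maximalIdeal r).mp hrmem hun
  · -- not principal → equality
    intro hp
    ext x
    constructor
    · intro hx
      set I : Ideal R :=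
        { carrier := {a : R | ∃ m ∈ maximalIdeal R, f a = x * f m}
          add_mem' := by
            rintro a b ⟨m, hm, hma⟩ ⟨n, hn, hnb⟩
            exact ⟨m + n, add_mem hm hn, by rw [map_add, map_add, hma, hnb, mul_add]⟩
          zero_mem' := ⟨0, zero_mem _, by simp⟩
          smul_mem' := by
            rintro c a ⟨m, hm, hma⟩
            refine ⟨c * m, Ideal.mul_mem_left _ c hm, ?_⟩
            simp only [smul_eq_mul, map_mul, hma]
            ring } with hI
      by_cases hIM : I ≤ maximalIdeal R
      · rintro j ⟨m, hm, rfl⟩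
        obtain ⟨a, ha⟩ := hx (f m) ⟨m, hm, rfl⟩
        have haI : a ∈ I := ⟨m, hm, ha⟩
        exact ⟨a, hIM haI, ha⟩
      · exfalso
        have htop : I = ⊤ := by
          by_contra hne
          exact hIM (le_maximalIdeal hne)
        have h1 : (1 : R) ∈ I := htop ▸ trivial
        obtain ⟨m, hm, hm1⟩ := h1
        apply hp
        refine ⟨m, ?_⟩
        rw [Ideal.submodule_span_eq]
        refine le_antisymm ?_ ?_
        · intro n hn
          obtain ⟨a, ha⟩ := hx (f n) ⟨n, hn, rfl⟩
          rw [Ideal.mem_span_singleton]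
          refine ⟨a, inj ?_⟩
          rw [map_mul, ha]
          calc f n = f n * f 1 := by rw [map_one, mul_one]
            _ = f n * (x * f m) := by rw [← hm1]
            _ = f m * (x * f n) := by ring
        · rw [Ideal.span_le, Set.singleton_subset_iff]
          exact hm
    · intro hx j hj
      obtain ⟨m, hm, rfl⟩ := hj
      obtain ⟨n, _, hn⟩ := hx (f m) ⟨m, hm, rfl⟩
      exact ⟨n, hn⟩
end

section
/- Let R be a local ring with maximal ideal M such that M contains a non-zero-divisor of R. If M is not a divisorial ideal of R, then (R : M) = (M : M). -/
open IsLocalRing in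
/-- Let `R` be a local ring whose maximal ideal `M` contains a
non-zero-divisor of `R`.  If `M` is not divisorial, then `(R : M) = (M : M)`. -/
theorem stmt17 {R : Type*} [CommRing R] [IsLocalRing R]
    (hreg : ∃ x ∈ maximalIdeal R, x ∈ nonZeroDivisors R)
    (hdiv : ¬ IsDivisorial R (maximalIdeal R)) :
    colonSet R (Rset R) (idealSet R (maximalIdeal R)) =
      colonSet R (idealSet R (maximalIdeal R)) (idealSet R (maximalIdeal R)) := by
  ext y
  constructor
  · intro hy
    by_cases h : ∀ j ∈ idealSet R (maximalIdeal R), y * j ∈ idealSet R (maximalIdeal R)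
    · exact h
    · exfalso
      apply hdiv
      push_neg at h
      obtain ⟨j, hj, hnj⟩ := h
      obtain ⟨m0, hm0, rfl⟩ := hj
      obtain ⟨r, hr⟩ := hy _ ⟨m0, hm0, rfl⟩
      have hrM : r ∉ maximalIdeal R := by
        intro hrm
        exact hnj ⟨r, hrm, hr⟩
      have hru : IsUnit r := by
        by_contra hc
        exact hrM hc
      obtain ⟨u, rfl⟩ := hru
      -- key element m ∈ M with y * algebraMap m = 1
      set m : R := m0 * (↑u⁻¹ : Rˣ) with hm
      have hmM : m ∈ maximalIdeal R := (maximalIdeal R).mul_mem_right _ hm0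
      have hkey : y * algebraMap R (FractionRing R) m = 1 := by
        rw [hm, map_mul, ← mul_assoc, ← hr, ← map_mul]
        simp
      -- show M is divisorial
      apply Set.Subset.antisymm
      · rintro z ⟨m', hm', rfl⟩ w hw
        obtain ⟨s, hs⟩ := hw _ ⟨m', hm', rfl⟩
        exact ⟨s, by rw [hs]; ring⟩
      · intro z hz
        obtain ⟨r', hr'⟩ := hz y hy
        refine ⟨r' * m, (maximalIdeal R).mul_mem_left _ hmM, ?_⟩
        rw [map_mul, hr']
        calc z * y * algebraMap R (FractionRing R) m = z * (y * algebraMap R (FractionRing R) m) := by ring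
          _ = z := by rw [hkey, mul_one]
  · intro hy j hj
    obtain ⟨m, _, hm⟩ := hy j hj
    exact ⟨m, hm⟩
end

section
/- Let R be a local ring with maximal ideal M such that M contains a non-zero-divisor of R. Then (M : M) ≠ R if and only if M is a non-principal divisorial ideal of R. -/
open IsLocalRing in
/-- Let `R` be a local ring whose maximal ideal `M` contains a
non-zero-divisor of `R`.  Then `(M : M) ≠ R` iff `M` is a non-principal divisorial
ideal of `R`. -/
theorem stmt18 {R : Type*} [CommRing R] [IsLocalRing R]
    (hreg : ∃ x ∈ maximalIdeal R, x ∈ nonZeroDivisors R) :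
    colonSet R (idealSet R (maximalIdeal R)) (idealSet R (maximalIdeal R)) ≠ Rset R ↔
      ¬ (maximalIdeal R).IsPrincipal ∧ IsDivisorial R (maximalIdeal R) := by
  classical
  set M := maximalIdeal R with hMdef
  set f := algebraMap R (FractionRing R) with hfdef
  have finj : Function.Injective f := IsFractionRing.injective R (FractionRing R)
  -- R ⊆ (M : M)
  have hRsub : Rset R ⊆ colonSet R (idealSet R M) (idealSet R M) := by
    rintro _ ⟨r, rfl⟩ _ ⟨m, hm, rfl⟩
    exact ⟨r * m, M.mul_mem_left r hm, (map_mul f r m)⟩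
  -- (M : M) ⊆ (R : M)
  have hMMRM : colonSet R (idealSet R M) (idealSet R M) ⊆
      colonSet R (Rset R) (idealSet R M) := by
    intro x hx j hj
    obtain ⟨m, hm, hfm⟩ := hx j hj
    exact ⟨m, hfm⟩
  have h1RM : (1 : FractionRing R) ∈ colonSet R (Rset R) (idealSet R M) := by
    rintro _ ⟨m, hm, rfl⟩
    exact ⟨m, (one_mul _).symm⟩
  have h1notM : (1 : FractionRing R) ∉ idealSet R M := by
    rintro ⟨m, hmM, hm⟩
    have hm1 : m = 1 := finj (by rw [hm, map_one])
    subst hm1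
    exact (mem_nonunits_iff.mp hmM) isUnit_one
  constructor
  · -- forward direction
    intro hne
    obtain ⟨u, huMM, huR⟩ := Set.exists_of_ssubset (hRsub.ssubset_of_ne hne.symm)
    constructor
    · -- non-principal
      rintro ⟨m, hMspan⟩
      obtain ⟨x, hxM, hxreg⟩ := hreg
      have hmM : m ∈ M := by
        rw [hMspan]; exact Submodule.mem_span_singleton_self m
      obtain ⟨c, hc⟩ : m ∣ x := by
        rw [hMspan] at hxM
        exact Ideal.mem_span_singleton.mp hxM
      have hmreg : m ∈ nonZeroDivisors R := by
        rw [mem_nonZeroDivisors_iff_right] at hxreg ⊢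
        intro t ht
        exact hxreg t (by rw [hc, ← mul_assoc, ht, zero_mul])
      have hfmu : IsUnit (f m) :=
        IsLocalization.map_units (FractionRing R) (⟨m, hmreg⟩ : nonZeroDivisors R)
      obtain ⟨m', hm'M, hm'⟩ := huMM (f m) ⟨m, hmM, rfl⟩
      obtain ⟨s, hs⟩ : m ∣ m' := by
        rw [hMspan] at hm'M
        exact Ideal.mem_span_singleton.mp hm'M
      apply huR
      refine ⟨s, ?_⟩
      have : f m * f s = f m * u := by
        rw [mul_comm (f m) u, ← hm', hs, map_mul]
      exact hfmu.mul_left_cancel this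
    · -- divisorial
      apply Set.Subset.antisymm
      · rintro _ ⟨m, hmM, rfl⟩ y hy
        rw [mul_comm]
        exact hy (f m) ⟨m, hmM, rfl⟩
      · intro z hz
        have hzR : z ∈ Rset R := by
          have := hz 1 h1RM
          rwa [mul_one] at this
        obtain ⟨r, rfl⟩ := hzR
        by_contra hrnot
        have hrM : r ∉ M := fun h => hrnot ⟨r, h, rfl⟩
        have hru : IsUnit r := by
          by_contra h
          exact hrM (mem_nonunits_iff.mpr h)
        obtain ⟨v, hv⟩ : ∃ v, v * r = 1 := by
          obtain ⟨w, hw⟩ := hru.exists_left_inv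
          exact ⟨w, hw⟩
        obtain ⟨s, hs⟩ := hz u (hMMRM huMM)
        rw [← hfdef] at hs
        apply huR
        refine ⟨v * s, ?_⟩
        show f (v * s) = u
        calc f (v * s) = f v * (f r * u) := by rw [map_mul, hs]
          _ = f (v * r) * u := by rw [map_mul, mul_assoc]
          _ = u := by rw [hv, map_one, one_mul]
  · -- backward direction
    rintro ⟨hnp, hdiv⟩ heq
    -- first get u ∈ (R : M) \ Rset
    obtain ⟨u, huRM, huR⟩ : ∃ u ∈ colonSet R (Rset R) (idealSet R M), u ∉ Rset R := by
      by_contra h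
      push_neg at h
      apply h1notM
      rw [hdiv]
      intro y hy
      rw [one_mul]
      exact h y hy
    have hunot : u ∉ colonSet R (idealSet R M) (idealSet R M) := by
      rw [heq]; exact huR
    obtain ⟨j, hj, hj2⟩ : ∃ j ∈ idealSet R M, u * j ∉ idealSet R M := by
      by_contra h
      push_neg at h
      exact hunot h
    obtain ⟨m₀, hm₀M, rfl⟩ := hj
    obtain ⟨r, hr⟩ := huRM (f m₀) ⟨m₀, hm₀M, rfl⟩
    rw [← hfdef] at hr
    have hrM : r ∉ M := fun h => hj2 ⟨r, h, hr⟩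
    have hru : IsUnit r := by
      by_contra h
      exact hrM (mem_nonunits_iff.mpr h)
    obtain ⟨v, hv⟩ : ∃ v, v * r = 1 := by
      obtain ⟨w, hw⟩ := hru.exists_left_inv
      exact ⟨w, hw⟩
    set m := v * m₀ with hm
    have hmM : m ∈ M := M.mul_mem_left v hm₀M
    have hum1 : u * f m = 1 := by
      calc u * f m = f v * (u * f m₀) := by rw [hm, map_mul]; ring
        _ = f v * f r := by rw [hr]
        _ = 1 := by rw [← map_mul, hv, map_one]
    apply hnp
    refine ⟨m, ?_⟩
    apply le_antisymm
    · intro x hxM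
      obtain ⟨s, hs⟩ := huRM (f x) ⟨x, hxM, rfl⟩
      rw [← hfdef] at hs
      have hxs : f x = f (m * s) := by
        calc f x = (u * f m) * f x := by rw [hum1, one_mul]
          _ = f m * (u * f x) := by ring
          _ = f m * f s := by rw [hs]
          _ = f (m * s) := (map_mul f m s).symm
      have : x ∈ Ideal.span {m} := Ideal.mem_span_singleton.mpr ⟨s, finj hxs⟩
      exact this
    · rw [Submodule.span_le, Set.singleton_subset_iff]
      exact hmM
end

section
/- Let R be a local ring whose maximal ideal M contains a non-zero-divisor of R, and assume that M is either a principal ideal of R or a non-divisorial ideal of R. Then there is no ring T properly containing R such that Spec(R) = Spec(T). -/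
set_option maxHeartbeats 2000000 in
set_option synthInstance.maxHeartbeats 200000 in
open IsLocalRing in
/-- Let `R` be a local ring whose maximal ideal `M` contains a
non-zero-divisor of `R`, and assume `M` is either principal or non-divisorial.  Then there
is no ring `T` properly containing `R` with `Spec(R) = Spec(T)`: for any ring `T` and any
realization of `R` as a proper subring of `T`, `Spec(R) ≠ Spec(T)`. -/
theorem stmt19 {T : Type*} [CommRing T] (R : Subring T) [IsLocalRing ↥R]
    (hreg : ∃ x ∈ maximalIdeal ↥R, x ∈ nonZeroDivisors ↥R)
    (hM : (maximalIdeal ↥R).IsPrincipal ∨ ¬ IsDivisorial ↥R (maximalIdeal ↥R))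
    (hproper : R ≠ ⊤) : ¬ SpecEq R := by
  intro hspec
  set M := maximalIdeal ↥R with hMdef
  set Mset : Set T := Subtype.val '' (M : Set ↥R) with hMsetdef
  -- Step A: Mset is (the carrier of) an ideal of T
  obtain ⟨J, hJprime, hJset⟩ := (hspec Mset).mpr ⟨M, inferInstance, rfl⟩
  -- Step B: every non-unit of T is in Mset
  have hB : ∀ t : T, ¬ IsUnit t → t ∈ Mset := by
    intro t ht
    obtain ⟨N, hNmax, htN⟩ := exists_max_ideal_of_mem_nonunits ht
    obtain ⟨I, hIprime, hIset⟩ := (hspec (N : Set T)).mp ⟨N, hNmax.isPrime, rfl⟩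
    have htN' : t ∈ (N : Set T) := htN
    rw [← hIset] at htN'
    obtain ⟨s, hsI, rfl⟩ := htN'
    exact ⟨s, le_maximalIdeal hIprime.ne_top hsI, rfl⟩
  -- Step C: Mset is multiplicatively absorbing in T
  have hC : ∀ t : T, ∀ x ∈ Mset, t * x ∈ Mset := by
    intro t x hx
    rw [← hJset] at hx ⊢
    exact J.mul_mem_left t hx
  -- Step D: a non-zero-divisor of R is a non-zero-divisor in T
  have hD : ∀ m' : ↥R, m' ∈ nonZeroDivisors ↥R → ∀ t : T, (m' : T) * t = 0 → t = 0 := by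
    intro m' hm' t hmt
    by_cases htu : IsUnit t
    · exfalso
      obtain ⟨w, rfl⟩ := htu
      have hm0 : (m' : T) = 0 := by
        have h2 := congrArg (· * (↑w⁻¹ : T)) hmt
        simpa [mul_assoc] using h2
      exact nonZeroDivisors.ne_zero hm' (Subtype.ext hm0)
    · obtain ⟨s, hsM, rfl⟩ := hB t htu
      have h0 : (s * m' : ↥R) = 0 := by
        apply Subtype.ext
        push_cast
        rw [mul_comm]
        exact hmt
      have : s = 0 := mem_nonZeroDivisors_iff_right.mp hm' s h0
      simp [this]
  obtain ⟨m, hmM, hmreg⟩ := hreg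
  -- for each t : T, pick s t ∈ M with ↑(s t) = t * ↑m
  have hst : ∀ t : T, ∃ s : ↥R, s ∈ M ∧ (s : T) = t * (m : T) :=
    fun t => by
      obtain ⟨s, hs, hval⟩ := hC t (m : T) ⟨m, hmM, rfl⟩
      exact ⟨s, hs, hval⟩
  choose s hsM hs using hst
  rcases hM with hprin | hnd
  · -- Principal case
    obtain ⟨m₀, hm₀⟩ := hprin
    have hm₀M : m₀ ∈ M := hm₀ ▸ Ideal.mem_span_singleton_self m₀
    -- m₀ is a non-zero-divisor of R
    obtain ⟨c, hc⟩ := Ideal.mem_span_singleton'.mp (hm₀ ▸ hmM)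
    have hm₀reg : m₀ ∈ nonZeroDivisors ↥R := by
      rw [mem_nonZeroDivisors_iff_right]
      intro z hz
      apply mem_nonZeroDivisors_iff_right.mp hmreg z
      rw [← hc, ← mul_assoc, mul_comm z c, mul_assoc, hz, mul_zero]
    apply hproper
    rw [Subring.eq_top_iff']
    intro t
    obtain ⟨s', hs'M, hs'⟩ := hC t (m₀ : T) ⟨m₀, hm₀M, rfl⟩
    obtain ⟨c', hc'⟩ := Ideal.mem_span_singleton'.mp (hm₀ ▸ hs'M)
    have hz : (m₀ : T) * (t - (c' : T)) = 0 := by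
      have h1 : (c' : T) * (m₀ : T) = t * (m₀ : T) := by
        rw [← hs']
        exact_mod_cast congrArg (Subtype.val) hc'
      linear_combination - h1
    have ht : t = (c' : T) := sub_eq_zero.mp (hD m₀ hm₀reg _ hz)
    rw [ht]; exact c'.2
  · -- Non-divisorial case: derive that M is divisorial, contradiction
    apply hnd
    set K := FractionRing ↥R with hK
    set alg := algebraMap ↥R K with halg
    have hinj : Function.Injective alg := IsFractionRing.injective ↥R K
    have hu : IsUnit (alg m) :=
      IsLocalization.map_units (M := nonZeroDivisors ↥R) K ⟨m, hmreg⟩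
    set ui : K := ↑hu.unit⁻¹ with hui
    have hmu : alg m * ui = 1 := hu.mul_val_inv
    -- ψ t := alg (s t) * ui represents t in K; it lies in (Rset : idealSet M)
    have hpsi : ∀ t : T, (alg (s t) * ui) ∈ colonSet ↥R (Rset ↥R) (idealSet ↥R M) := by
      intro t j hj
      obtain ⟨a, haM, rfl⟩ := hj
      obtain ⟨b, hbM, hb⟩ := hC t (a : T) ⟨a, haM, rfl⟩
      have hkey : s t * a = m * b := by
        apply Subtype.ext
        push_cast
        rw [hs t, hb]
        ring
      have : alg (s t) * ui * alg a = alg b := by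
        rw [mul_comm (alg (s t)) ui, mul_assoc, ← map_mul, hkey, map_mul,
          ← mul_assoc, mul_comm ui (alg m), hmu, one_mul]
      rw [this]
      exact ⟨b, rfl⟩
    unfold IsDivisorial
    ext x
    constructor
    · rintro ⟨a, haM, rfl⟩ j hj
      rw [mul_comm]
      exact hj _ ⟨a, haM, rfl⟩
    · intro hx
      have h1C : (1 : K) ∈ colonSet ↥R (Rset ↥R) (idealSet ↥R M) := by
        rintro j ⟨a, haM, rfl⟩
        rw [one_mul]
        exact ⟨a, rfl⟩
      obtain ⟨r, hr⟩ := hx 1 h1C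
      rw [mul_one] at hr
      -- show r ∈ M; otherwise r is a unit and T = R
      by_cases hrM : r ∈ M
      · exact ⟨r, hrM, hr⟩
      exfalso
      have hrunit : IsUnit r := by
        by_contra h
        exact hrM (h : r ∈ nonunits ↥R)
      obtain ⟨v, hv⟩ := hrunit
      apply hproper
      rw [Subring.eq_top_iff']
      intro t
      obtain ⟨r', hr'⟩ := hx _ (hpsi t)
      have hkey : r * s t = r' * m := by
        apply hinj
        rw [map_mul, map_mul]
        calc alg r * alg (s t) = alg r * alg (s t) * (alg m * ui) := by rw [hmu, mul_one]
          _ = (alg r * (alg (s t) * ui)) * alg m := by ring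
          _ = alg r' * alg m := by rw [hr, hr']
      have hT : (r : T) * (t * (m : T)) = (r' : T) * (m : T) := by
        rw [← hs t]
        exact_mod_cast congrArg Subtype.val hkey
      have hz : (m : T) * ((r : T) * t - (r' : T)) = 0 := by linear_combination hT
      have hrt : (r : T) * t = (r' : T) := sub_eq_zero.mp (hD m hmreg _ hz)
      have hvi : ∃ vi : ↥R, vi * r = 1 := ⟨↑v⁻¹, by rw [← hv]; exact v.inv_mul⟩
      obtain ⟨vi, hvi⟩ := hvi
      have hone : (vi : T) * (r : T) = 1 := by exact_mod_cast congrArg Subtype.val hvi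
      have ht : t = ((vi * r' : ↥R) : T) := by
        push_cast
        calc t = ((vi : T) * (r : T)) * t := by rw [hone, one_mul]
          _ = (vi : T) * ((r : T) * t) := by ring
          _ = (vi : T) * (r' : T) := by rw [hrt]
      rw [ht]
      exact (vi * r').2
end
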